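/- arXiv:1312.1574 — 14 statements merged into one kernel-verified Lean document; each statement's English description precedes it below -/
import Mathlib

section
/- Let ε > 0 and let u : ℤ³ → ℝ be any function. Then at every lattice point the pointwise identity ε³·[Δ₁((Δ₃u)² − (Δ₂u)²) + Δ₂((Δ₁u)² − (Δ₃u)²) + Δ₃((Δ₂u)² − (Δ₁u)²)] = 2·[(T₁u − T₂u)·T₁₂u + (T₃u − T₁u)·T₁₃u + (T₂u − T₃u)·T₂₃u] holds. In particular, the discrete conservation law Δ₁((Δ₃u)² − (Δ₂u)²) + Δ₂((Δ₁u)² − (Δ₃u)²) + Δ₃((Δ₂u)² − (Δ₁u)²) = 0 holds at a point if and only if the lattice KP equation (T₁u − T₂u)T₁₂u + (T₃u − T₁u)T₁₃u + (T₂u − T₃u)T₂₃u = 0 holds at that point. -/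
noncomputable section

/-- Forward shift in the first lattice direction. -/
def T1 (v : ℤ × ℤ × ℤ → ℝ) : ℤ × ℤ × ℤ → ℝ := fun p => v (p.1 + 1, p.2.1, p.2.2)

/-- Forward shift in the second lattice direction. -/
def T2 (v : ℤ × ℤ × ℤ → ℝ) : ℤ × ℤ × ℤ → ℝ := fun p => v (p.1, p.2.1 + 1, p.2.2)

/-- Forward shift in the third lattice direction. -/
def T3 (v : ℤ × ℤ × ℤ → ℝ) : ℤ × ℤ × ℤ → ℝ := fun p => v (p.1, p.2.1, p.2.2 + 1)

/-- Discrete derivative `Δ₁ = (T₁ - 1)/ε`. -/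
def D1 (ε : ℝ) (v : ℤ × ℤ × ℤ → ℝ) : ℤ × ℤ × ℤ → ℝ := fun p => (T1 v p - v p) / ε

/-- Discrete derivative `Δ₂ = (T₂ - 1)/ε`. -/
def D2 (ε : ℝ) (v : ℤ × ℤ × ℤ → ℝ) : ℤ × ℤ × ℤ → ℝ := fun p => (T2 v p - v p) / ε

/-- Discrete derivative `Δ₃ = (T₃ - 1)/ε`. -/
def D3 (ε : ℝ) (v : ℤ × ℤ × ℤ → ℝ) : ℤ × ℤ × ℤ → ℝ := fun p => (T3 v p - v p) / ε

/-- The discrete conservation law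
`Δ₁((Δ₃u)² − (Δ₂u)²) + Δ₂((Δ₁u)² − (Δ₃u)²) + Δ₃((Δ₂u)² − (Δ₁u)²)` is, up to the
factor `2/ε³`, the lattice KP equation
`(T₁u − T₂u)T₁₂u + (T₃u − T₁u)T₁₃u + (T₂u − T₃u)T₂₃u = 0`. -/
theorem lattice_KP_conservation (ε : ℝ) (hε : 0 < ε) (u : ℤ × ℤ × ℤ → ℝ)
    (p : ℤ × ℤ × ℤ) :
    (ε ^ 3 * (D1 ε (fun q => (D3 ε u q) ^ 2 - (D2 ε u q) ^ 2) p
        + D2 ε (fun q => (D1 ε u q) ^ 2 - (D3 ε u q) ^ 2) p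
        + D3 ε (fun q => (D2 ε u q) ^ 2 - (D1 ε u q) ^ 2) p)
      = 2 * ((T1 u p - T2 u p) * T1 (T2 u) p + (T3 u p - T1 u p) * T1 (T3 u) p
        + (T2 u p - T3 u p) * T2 (T3 u) p))
    ∧ (D1 ε (fun q => (D3 ε u q) ^ 2 - (D2 ε u q) ^ 2) p
        + D2 ε (fun q => (D1 ε u q) ^ 2 - (D3 ε u q) ^ 2) p
        + D3 ε (fun q => (D2 ε u q) ^ 2 - (D1 ε u q) ^ 2) p = 0
      ↔ (T1 u p - T2 u p) * T1 (T2 u) p + (T3 u p - T1 u p) * T1 (T3 u) p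
        + (T2 u p - T3 u p) * T2 (T3 u) p = 0) := by
  have hne : ε ≠ 0 := ne_of_gt hε
  have key : ε ^ 3 * (D1 ε (fun q => (D3 ε u q) ^ 2 - (D2 ε u q) ^ 2) p
        + D2 ε (fun q => (D1 ε u q) ^ 2 - (D3 ε u q) ^ 2) p
        + D3 ε (fun q => (D2 ε u q) ^ 2 - (D1 ε u q) ^ 2) p)
      = 2 * ((T1 u p - T2 u p) * T1 (T2 u) p + (T3 u p - T1 u p) * T1 (T3 u) p
        + (T2 u p - T3 u p) * T2 (T3 u) p) := by
    simp only [D1, D2, D3, T1, T2, T3]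
    obtain ⟨a, b, c⟩ := p
    field_simp
    ring
  refine ⟨key, ?_⟩
  constructor
  · intro h
    have := key.symm.trans (by rw [h, mul_zero])
    linarith
  · intro h
    have h3 : (ε ^ 3) ≠ 0 := pow_ne_zero 3 hne
    have := key.trans (by rw [h, mul_zero])
    exact (mul_eq_zero.mp this).resolve_left h3
end
end

section
/- Let ε > 0 and let u : ℤ³ → ℝ satisfy the lattice KP equation (T₁u − T₂u)T₁₂u + (T₃u − T₁u)T₁₃u + (T₂u − T₃u)T₂₃u = 0 at every lattice point, and assume the differences Δ₃u − Δ₂u, Δ₁u − Δ₃u, Δ₂u − Δ₁u are nonzero at every lattice point. Then for all real constants α₁, α₂, α₃ with α₁ + α₂ + α₃ = 0, the discrete conservation law α₁·Δ₁ log|Δ₃u − Δ₂u| + α₂·Δ₂ log|Δ₁u − Δ₃u| + α₃·Δ₃ log|Δ₂u − Δ₁u| = 0 holds at every lattice point. -/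
noncomputable section

/-- If `u` satisfies the lattice KP equation everywhere and the differences
`Δ₃u − Δ₂u`, `Δ₁u − Δ₃u`, `Δ₂u − Δ₁u` are nowhere zero, then for all constants
`α₁ + α₂ + α₃ = 0` the discrete conservation law
`α₁Δ₁ log|Δ₃u − Δ₂u| + α₂Δ₂ log|Δ₁u − Δ₃u| + α₃Δ₃ log|Δ₂u − Δ₁u| = 0` holds. -/
theorem lattice_KP_log_conservation (ε : ℝ) (hε : 0 < ε) (u : ℤ × ℤ × ℤ → ℝ)
    (hKP : ∀ p : ℤ × ℤ × ℤ,
      (T1 u p - T2 u p) * T1 (T2 u) p + (T3 u p - T1 u p) * T1 (T3 u) p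
        + (T2 u p - T3 u p) * T2 (T3 u) p = 0)
    (h32 : ∀ p : ℤ × ℤ × ℤ, D3 ε u p - D2 ε u p ≠ 0)
    (h13 : ∀ p : ℤ × ℤ × ℤ, D1 ε u p - D3 ε u p ≠ 0)
    (h21 : ∀ p : ℤ × ℤ × ℤ, D2 ε u p - D1 ε u p ≠ 0)
    (α₁ α₂ α₃ : ℝ) (hα : α₁ + α₂ + α₃ = 0) :
    ∀ p : ℤ × ℤ × ℤ,
      α₁ * D1 ε (fun q => Real.log |D3 ε u q - D2 ε u q|) p
      + α₂ * D2 ε (fun q => Real.log |D1 ε u q - D3 ε u q|) p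
      + α₃ * D3 ε (fun q => Real.log |D2 ε u q - D1 ε u q|) p = 0 := by

  intro p
  have hε' : ε ≠ 0 := ne_of_gt hε
  set f : ℤ × ℤ × ℤ → ℝ := fun q => D1 ε u q - D3 ε u q with hf
  set e : ℤ × ℤ × ℤ → ℝ := fun q => D3 ε u q - D2 ε u q with he
  set g : ℤ × ℤ × ℤ → ℝ := fun q => D2 ε u q - D1 ε u q with hg
  set p1 : ℤ × ℤ × ℤ := (p.1 + 1, p.2.1, p.2.2) with hp1
  set p2 : ℤ × ℤ × ℤ := (p.1, p.2.1 + 1, p.2.2) with hp2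
  set p3 : ℤ × ℤ × ℤ := (p.1, p.2.1, p.2.2 + 1) with hp3
  have hKPp := hKP p
  simp only [T1, T2, T3, D1, D2, D3] at hKPp
  -- key algebraic identities
  have key1 : f p * e p1 = e p * f p2 := by
    simp only [hf, he, D1, D2, D3, T1, T2, T3, hp1, hp2]
    field_simp
    ring_nf
    ring_nf at hKPp
    nlinarith [hKPp, sq_nonneg ε]
  have key2 : e p * g p3 = g p * e p1 := by
    simp only [hf, he, hg, D1, D2, D3, T1, T2, T3, hp1, hp3]
    field_simp
    ring_nf
    ring_nf at hKPp
    nlinarith [hKPp, sq_nonneg ε]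
  have hep := h32 p
  have hep1 := h32 p1
  have hfp := h13 p
  have hfp2 := h13 p2
  have hgp := h21 p
  have hgp3 := h21 p3
  -- log identities
  have log1 : Real.log |e p1| - Real.log |e p| = Real.log |f p2| - Real.log |f p| := by
    have h1 : Real.log (|f p| * |e p1|) = Real.log (|e p| * |f p2|) := by
      rw [← abs_mul, ← abs_mul, key1]
    rw [Real.log_mul (abs_ne_zero.2 hfp) (abs_ne_zero.2 hep1),
        Real.log_mul (abs_ne_zero.2 hep) (abs_ne_zero.2 hfp2)] at h1
    linarith
  have log2 : Real.log |g p3| - Real.log |g p| = Real.log |e p1| - Real.log |e p| := by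
    have h1 : Real.log (|e p| * |g p3|) = Real.log (|g p| * |e p1|) := by
      rw [← abs_mul, ← abs_mul, key2]
    rw [Real.log_mul (abs_ne_zero.2 hep) (abs_ne_zero.2 hgp3),
        Real.log_mul (abs_ne_zero.2 hgp) (abs_ne_zero.2 hep1)] at h1
    linarith
  show α₁ * ((Real.log |e p1| - Real.log |e p|) / ε)
      + α₂ * ((Real.log |f p2| - Real.log |f p|) / ε)
      + α₃ * ((Real.log |g p3| - Real.log |g p|) / ε) = 0
  rw [← log1, log2]
  linear_combination ((Real.log |e p1| - Real.log |e p|) / ε) * hα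
end
end

section
/- Let ε > 0 and let u : ℤ³ → ℝ be any function. Then at every lattice point the pointwise identity ε³·[Δ₁((Δ₂u)²/2 − Δ₂u·Δ₃u) + Δ₂(Δ₁u·Δ₃u − (Δ₁u)²/2)] = −[T₁₂u·T₁₃u + T₂u·T₂₃u + T₁u·T₃u − T₁₂u·T₂₃u − T₁u·T₁₃u − T₂u·T₃u] holds. In particular, the discrete conservation law Δ₁((Δ₂u)²/2 − Δ₂uΔ₃u) + Δ₂(Δ₁uΔ₃u − (Δ₁u)²/2) = 0 holds at a point if and only if the octahedron equation T₁₂u·T₁₃u + T₂u·T₂₃u + T₁u·T₃u = T₁₂u·T₂₃u + T₁u·T₁₃u + T₂u·T₃u holds at that point. -/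
noncomputable section

/-- The discrete conservation law
`Δ₁((Δ₂u)²/2 − Δ₂uΔ₃u) + Δ₂(Δ₁uΔ₃u − (Δ₁u)²/2) = 0` is, up to the factor
`−1/ε³`, the octahedron equation
`T₁₂u·T₁₃u + T₂u·T₂₃u + T₁u·T₃u = T₁₂u·T₂₃u + T₁u·T₁₃u + T₂u·T₃u`. -/
theorem octahedron_case2_conservation (ε : ℝ) (hε : 0 < ε) (u : ℤ × ℤ × ℤ → ℝ)
    (p : ℤ × ℤ × ℤ) :
    (ε ^ 3 * (D1 ε (fun q => (D2 ε u q) ^ 2 / 2 - D2 ε u q * D3 ε u q) p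
        + D2 ε (fun q => D1 ε u q * D3 ε u q - (D1 ε u q) ^ 2 / 2) p)
      = -(T1 (T2 u) p * T1 (T3 u) p + T2 u p * T2 (T3 u) p + T1 u p * T3 u p
          - T1 (T2 u) p * T2 (T3 u) p - T1 u p * T1 (T3 u) p - T2 u p * T3 u p))
    ∧ (D1 ε (fun q => (D2 ε u q) ^ 2 / 2 - D2 ε u q * D3 ε u q) p
        + D2 ε (fun q => D1 ε u q * D3 ε u q - (D1 ε u q) ^ 2 / 2) p = 0
      ↔ T1 (T2 u) p * T1 (T3 u) p + T2 u p * T2 (T3 u) p + T1 u p * T3 u p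
        = T1 (T2 u) p * T2 (T3 u) p + T1 u p * T1 (T3 u) p + T2 u p * T3 u p) := by
  have hne : ε ≠ 0 := ne_of_gt hε
  have h3 : ε ^ 3 ≠ 0 := pow_ne_zero 3 hne
  have key : ε ^ 3 * (D1 ε (fun q => (D2 ε u q) ^ 2 / 2 - D2 ε u q * D3 ε u q) p
        + D2 ε (fun q => D1 ε u q * D3 ε u q - (D1 ε u q) ^ 2 / 2) p)
      = -(T1 (T2 u) p * T1 (T3 u) p + T2 u p * T2 (T3 u) p + T1 u p * T3 u p
          - T1 (T2 u) p * T2 (T3 u) p - T1 u p * T1 (T3 u) p - T2 u p * T3 u p) := by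
    simp only [D1, D2, D3, T1, T2, T3]
    field_simp
    ring
  refine ⟨key, ?_⟩
  constructor
  · intro h
    have := key
    rw [h, mul_zero] at this
    linarith [this]
  · intro h
    have h0 : ε ^ 3 * (D1 ε (fun q => (D2 ε u q) ^ 2 / 2 - D2 ε u q * D3 ε u q) p
        + D2 ε (fun q => D1 ε u q * D3 ε u q - (D1 ε u q) ^ 2 / 2) p) = 0 := by
      rw [key]; linarith
    exact (mul_eq_zero.mp h0).resolve_left h3
end
end

section
/- Let ε > 0 and let u : ℤ³ → ℝ be any function. Then at every lattice point the pointwise identity ε·[Δ₁ e^{Δ₂u} + Δ₃(e^{Δ₂u − Δ₁u} − e^{Δ₂u})] = e^{(T₂₃u − T₁u)/ε}·[e^{(T₁u − T₁₃u)/ε} + e^{(T₁₂u − T₂₃u)/ε} − e^{(T₁u − T₃u)/ε} − e^{(T₂u − T₂₃u)/ε}] holds. In particular, the discrete conservation law Δ₁ e^{Δ₂u} + Δ₃(e^{Δ₂u − Δ₁u} − e^{Δ₂u}) = 0 holds at a point if and only if the octahedron equation e^{(T₁u − T₁₃u)/ε} + e^{(T₁₂u − T₂₃u)/ε} = e^{(T₁u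 − T₃u)/ε} + e^{(T₂u − T₂₃u)/ε} holds at that point. -/
noncomputable section

/-- The discrete conservation law `Δ₁ e^{Δ₂u} + Δ₃(e^{Δ₂u − Δ₁u} − e^{Δ₂u}) = 0`
is, up to the positive factor `e^{(T₂₃u − T₁u)/ε}/ε`, the octahedron equation
`e^{(T₁u − T₁₃u)/ε} + e^{(T₁₂u − T₂₃u)/ε} = e^{(T₁u − T₃u)/ε} + e^{(T₂u − T₂₃u)/ε}`. -/
theorem octahedron_case1_conservation (ε : ℝ) (hε : 0 < ε) (u : ℤ × ℤ × ℤ → ℝ)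
    (p : ℤ × ℤ × ℤ) :
    (ε * (D1 ε (fun q => Real.exp (D2 ε u q)) p
        + D3 ε (fun q => Real.exp (D2 ε u q - D1 ε u q) - Real.exp (D2 ε u q)) p)
      = Real.exp ((T2 (T3 u) p - T1 u p) / ε)
        * (Real.exp ((T1 u p - T1 (T3 u) p) / ε)
          + Real.exp ((T1 (T2 u) p - T2 (T3 u) p) / ε)
          - Real.exp ((T1 u p - T3 u p) / ε)
          - Real.exp ((T2 u p - T2 (T3 u) p) / ε)))
    ∧ (D1 ε (fun q => Real.exp (D2 ε u q)) p
        + D3 ε (fun q => Real.exp (D2 ε u q - D1 ε u q) - Real.exp (D2 ε u q)) p = 0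
      ↔ Real.exp ((T1 u p - T1 (T3 u) p) / ε) + Real.exp ((T1 (T2 u) p - T2 (T3 u) p) / ε)
        = Real.exp ((T1 u p - T3 u p) / ε) + Real.exp ((T2 u p - T2 (T3 u) p) / ε)) := by
  have hε' : ε ≠ 0 := ne_of_gt hε
  have h1 : ε * (D1 ε (fun q => Real.exp (D2 ε u q)) p
        + D3 ε (fun q => Real.exp (D2 ε u q - D1 ε u q) - Real.exp (D2 ε u q)) p)
      = Real.exp ((T2 (T3 u) p - T1 u p) / ε)
        * (Real.exp ((T1 u p - T1 (T3 u) p) / ε)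
          + Real.exp ((T1 (T2 u) p - T2 (T3 u) p) / ε)
          - Real.exp ((T1 u p - T3 u p) / ε)
          - Real.exp ((T2 u p - T2 (T3 u) p) / ε)) := by
    simp only [D1, D2, D3, T1, T2, T3, sub_div, Real.exp_sub]
    field_simp
    ring
  refine ⟨h1, ?_⟩
  constructor
  · intro h
    rw [h, mul_zero] at h1
    have h2 := (mul_eq_zero.mp h1.symm).resolve_left (Real.exp_ne_zero _)
    linarith
  · intro h
    have h2 : Real.exp ((T1 u p - T1 (T3 u) p) / ε)
          + Real.exp ((T1 (T2 u) p - T2 (T3 u) p) / ε)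
          - Real.exp ((T1 u p - T3 u p) / ε)
          - Real.exp ((T2 u p - T2 (T3 u) p) / ε) = 0 := by linarith
    rw [h2, mul_zero] at h1
    exact (mul_eq_zero.mp h1).resolve_left hε'
end
end

section
/- Let ε > 0, let u : ℤ³ → ℝ be any function, and define τ : ℤ³ → ℝ pointwise by τ = e^{u/ε}. Then at every lattice point the pointwise identity ε·[Δ₁(e^{Δ₃u} − e^{Δ₂u}) + Δ₂(e^{Δ₁u} − e^{Δ₃u}) + Δ₃(e^{Δ₂u} − e^{Δ₁u})] = (T₁₃τ − T₁₂τ)/T₁τ + (T₁₂τ − T₂₃τ)/T₂τ + (T₂₃τ − T₁₃τ)/T₃τ holds. In particular, the discrete conservation law on the left vanishes at a point if and only if τ satisfies the lattice mKP equation (T₁₃τ − T₁₂τ)/T₁τ + (T₁₂τ − T₂₃τ)/T₂τ + (T₂₃τ − T₁₃τ)/T₃τ = 0 at that point. -/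
noncomputable section

/-- With `τ = e^{u/ε}`, the discrete conservation law
`Δ₁(e^{Δ₃u} − e^{Δ₂u}) + Δ₂(e^{Δ₁u} − e^{Δ₃u}) + Δ₃(e^{Δ₂u} − e^{Δ₁u}) = 0` is,
up to the factor `1/ε`, the lattice mKP equation
`(T₁₃τ − T₁₂τ)/T₁τ + (T₁₂τ − T₂₃τ)/T₂τ + (T₂₃τ − T₁₃τ)/T₃τ = 0`. -/
theorem lattice_mKP_conservation (ε : ℝ) (hε : 0 < ε) (u : ℤ × ℤ × ℤ → ℝ)
    (τ : ℤ × ℤ × ℤ → ℝ) (hτ : ∀ p, τ p = Real.exp (u p / ε)) (p : ℤ × ℤ × ℤ) :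
    (ε * (D1 ε (fun q => Real.exp (D3 ε u q) - Real.exp (D2 ε u q)) p
        + D2 ε (fun q => Real.exp (D1 ε u q) - Real.exp (D3 ε u q)) p
        + D3 ε (fun q => Real.exp (D2 ε u q) - Real.exp (D1 ε u q)) p)
      = (T1 (T3 τ) p - T1 (T2 τ) p) / T1 τ p
        + (T1 (T2 τ) p - T2 (T3 τ) p) / T2 τ p
        + (T2 (T3 τ) p - T1 (T3 τ) p) / T3 τ p)
    ∧ (D1 ε (fun q => Real.exp (D3 ε u q) - Real.exp (D2 ε u q)) p
        + D2 ε (fun q => Real.exp (D1 ε u q) - Real.exp (D3 ε u q)) p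
        + D3 ε (fun q => Real.exp (D2 ε u q) - Real.exp (D1 ε u q)) p = 0
      ↔ (T1 (T3 τ) p - T1 (T2 τ) p) / T1 τ p
        + (T1 (T2 τ) p - T2 (T3 τ) p) / T2 τ p
        + (T2 (T3 τ) p - T1 (T3 τ) p) / T3 τ p = 0) := by
  have key : (ε * (D1 ε (fun q => Real.exp (D3 ε u q) - Real.exp (D2 ε u q)) p
        + D2 ε (fun q => Real.exp (D1 ε u q) - Real.exp (D3 ε u q)) p
        + D3 ε (fun q => Real.exp (D2 ε u q) - Real.exp (D1 ε u q)) p)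
      = (T1 (T3 τ) p - T1 (T2 τ) p) / T1 τ p
        + (T1 (T2 τ) p - T2 (T3 τ) p) / T2 τ p
        + (T2 (T3 τ) p - T1 (T3 τ) p) / T3 τ p) := by
    obtain ⟨a, b, c⟩ := p
    simp only [D1, D2, D3, T1, T2, T3, hτ, sub_div, Real.exp_sub]
    have hε' : ε ≠ 0 := ne_of_gt hε
    field_simp
    ring
  refine ⟨key, ?_⟩
  constructor
  · intro h
    rw [← key, h, mul_zero]
  · intro h
    have := key.trans h
    rcases mul_eq_zero.mp this with h' | h'
    · exact absurd h' (ne_of_gt hε)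
    · exact h'
end
end

section
/- Let ε > 0, let u : ℤ³ → ℝ be any function, and define τ : ℤ³ → ℝ pointwise by τ = e^{u/ε}. Then at every lattice point the pointwise identity ε·[Δ₁ e^{Δ₂u} − Δ₂ e^{Δ₁u} + Δ₃(e^{Δ₁u} − e^{Δ₂u})] = [T₁₂τ/T₁τ − T₂₃τ/T₃τ] − [T₁₂τ/T₂τ − T₁₃τ/T₃τ] holds. In particular, the discrete conservation law Δ₁ e^{Δ₂u} − Δ₂ e^{Δ₁u} + Δ₃(e^{Δ₁u} − e^{Δ₂u}) = 0 holds at a point if and only if τ satisfies the lattice Toda equation (T₁ − T₃)(T₂τ/τ) = (T₂ − T₃)(T₁τ/τ) at that point. -/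
noncomputable section

/-- With `τ = e^{u/ε}`, the discrete conservation law
`Δ₁ e^{Δ₂u} − Δ₂ e^{Δ₁u} + Δ₃(e^{Δ₁u} − e^{Δ₂u}) = 0` is, up to the factor
`1/ε`, the lattice Toda equation `(T₁ − T₃)(T₂τ/τ) = (T₂ − T₃)(T₁τ/τ)`. -/
theorem lattice_Toda_conservation (ε : ℝ) (hε : 0 < ε) (u : ℤ × ℤ × ℤ → ℝ)
    (τ : ℤ × ℤ × ℤ → ℝ) (hτ : ∀ p, τ p = Real.exp (u p / ε)) (p : ℤ × ℤ × ℤ) :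
    (ε * (D1 ε (fun q => Real.exp (D2 ε u q)) p
        - D2 ε (fun q => Real.exp (D1 ε u q)) p
        + D3 ε (fun q => Real.exp (D1 ε u q) - Real.exp (D2 ε u q)) p)
      = (T1 (T2 τ) p / T1 τ p - T2 (T3 τ) p / T3 τ p)
        - (T1 (T2 τ) p / T2 τ p - T1 (T3 τ) p / T3 τ p))
    ∧ (D1 ε (fun q => Real.exp (D2 ε u q)) p
        - D2 ε (fun q => Real.exp (D1 ε u q)) p
        + D3 ε (fun q => Real.exp (D1 ε u q) - Real.exp (D2 ε u q)) p = 0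
      ↔ T1 (fun q => T2 τ q / τ q) p - T3 (fun q => T2 τ q / τ q) p
        = T2 (fun q => T1 τ q / τ q) p - T3 (fun q => T1 τ q / τ q) p) := by
  have hne : ε ≠ 0 := hε.ne'
  have key : ε * (D1 ε (fun q => Real.exp (D2 ε u q)) p
        - D2 ε (fun q => Real.exp (D1 ε u q)) p
        + D3 ε (fun q => Real.exp (D1 ε u q) - Real.exp (D2 ε u q)) p)
      = (T1 (T2 τ) p / T1 τ p - T2 (T3 τ) p / T3 τ p)
        - (T1 (T2 τ) p / T2 τ p - T1 (T3 τ) p / T3 τ p) := by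
    simp only [D1, D2, D3, T1, T2, T3, hτ, sub_div, Real.exp_sub]
    field_simp
    ring
  refine ⟨key, ?_⟩
  simp only [T1, T2, T3] at key ⊢
  constructor
  · intro h
    rw [h, mul_zero] at key
    linarith
  · intro h
    have h0 : ε * (D1 ε (fun q => Real.exp (D2 ε u q)) p
        - D2 ε (fun q => Real.exp (D1 ε u q)) p
        + D3 ε (fun q => Real.exp (D1 ε u q) - Real.exp (D2 ε u q)) p) = 0 := by
      rw [key]; linarith
    exact (mul_eq_zero.mp h0).resolve_left hne
end
end

section
/- Let ε > 0 and let u : ℤ³ → ℝ satisfy the Schwarzian KP equation (T₂Δ₁u)(T₃Δ₂u)(T₁Δ₃u) = (T₂Δ₃u)(T₃Δ₁u)(T₁Δ₂u) at every lattice point. Assume moreover that at every lattice point Δ₁u ≠ 0 and the quantities 1 − Δ₃u/Δ₁u and Δ₂u/Δ₁u − 1 are positive. Then the discrete conservation law Δ₂ log(1 − Δ₃u/Δ₁u) − Δ₃ log(Δ₂u/Δ₁u − 1) = 0 holds at every lattice point. -/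
noncomputable section

/-- If `u` satisfies the Schwarzian KP equation everywhere, `Δ₁u ≠ 0`, and the
quantities `1 − Δ₃u/Δ₁u` and `Δ₂u/Δ₁u − 1` are everywhere positive, then the
discrete conservation law
`Δ₂ log(1 − Δ₃u/Δ₁u) − Δ₃ log(Δ₂u/Δ₁u − 1) = 0` holds everywhere. -/
theorem schwarzian_KP_conservation (ε : ℝ) (hε : 0 < ε) (u : ℤ × ℤ × ℤ → ℝ)
    (hSKP : ∀ p : ℤ × ℤ × ℤ,
      T2 (D1 ε u) p * T3 (D2 ε u) p * T1 (D3 ε u) p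
        = T2 (D3 ε u) p * T3 (D1 ε u) p * T1 (D2 ε u) p)
    (h1 : ∀ p : ℤ × ℤ × ℤ, D1 ε u p ≠ 0)
    (h31 : ∀ p : ℤ × ℤ × ℤ, 0 < 1 - D3 ε u p / D1 ε u p)
    (h21 : ∀ p : ℤ × ℤ × ℤ, 0 < D2 ε u p / D1 ε u p - 1) :
    ∀ p : ℤ × ℤ × ℤ,
      D2 ε (fun q => Real.log (1 - D3 ε u q / D1 ε u q)) p
        - D3 ε (fun q => Real.log (D2 ε u q / D1 ε u q - 1)) p = 0 := by
  intro p
  obtain ⟨i, j, k⟩ := p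
  have hεne : ε ≠ 0 := ne_of_gt hε
  have ha : u (i + 1, j, k) - u (i, j, k) ≠ 0 := by
    intro h; exact h1 (i, j, k) (by simp [D1, T1, h])
  have ha2 : u (i + 1, j + 1, k) - u (i, j + 1, k) ≠ 0 := by
    intro h; exact h1 (i, j + 1, k) (by simp [D1, T1, h])
  have ha3 : u (i + 1, j, k + 1) - u (i, j, k + 1) ≠ 0 := by
    intro h; exact h1 (i, j, k + 1) (by simp [D1, T1, h])
  have hs := hSKP (i, j, k)
  simp only [D1, D2, D3, T1, T2, T3] at hs
  rw [div_mul_div_comm, div_mul_div_comm, div_mul_div_comm, div_mul_div_comm,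
    div_eq_div_iff (by positivity) (by positivity)] at hs
  -- the product identity
  have key : (1 - D3 ε u (i, j + 1, k) / D1 ε u (i, j + 1, k))
        * (D2 ε u (i, j, k) / D1 ε u (i, j, k) - 1)
      = (D2 ε u (i, j, k + 1) / D1 ε u (i, j, k + 1) - 1)
        * (1 - D3 ε u (i, j, k) / D1 ε u (i, j, k)) := by
    have hs' := mul_right_cancel₀ (show ε * ε * ε ≠ 0 by positivity) hs
    simp only [D1, D2, D3, T1, T2, T3]
    field_simp
    linear_combination hs'
  have l1 := h31 (i, j + 1, k)
  have l2 := h21 (i, j, k)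
  have l3 := h21 (i, j, k + 1)
  have l4 := h31 (i, j, k)
  have hlog : Real.log (1 - D3 ε u (i, j + 1, k) / D1 ε u (i, j + 1, k))
        + Real.log (D2 ε u (i, j, k) / D1 ε u (i, j, k) - 1)
      = Real.log (D2 ε u (i, j, k + 1) / D1 ε u (i, j, k + 1) - 1)
        + Real.log (1 - D3 ε u (i, j, k) / D1 ε u (i, j, k)) := by
    rw [← Real.log_mul (ne_of_gt l1) (ne_of_gt l2), ← Real.log_mul (ne_of_gt l3) (ne_of_gt l4),
      key]
  show (Real.log (1 - D3 ε u (i, j + 1, k) / D1 ε u (i, j + 1, k))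
      - Real.log (1 - D3 ε u (i, j, k) / D1 ε u (i, j, k))) / ε
      - (Real.log (D2 ε u (i, j, k + 1) / D1 ε u (i, j, k + 1) - 1)
      - Real.log (D2 ε u (i, j, k) / D1 ε u (i, j, k) - 1)) / ε = 0
  rw [div_sub_div_same, div_eq_zero_iff]
  left
  linarith
end
end

section
/- For all real numbers x, y, z the algebraic identity (x²y²z² − x² − y² − z²)² − 4(y²z² + x²y² + x²z² − 2x²y²z²) = (xyz + x + y + z)(xyz − x − y + z)(xyz − x + y − z)(xyz + x − y − z) holds. Consequently, writing x = e^{v₂₃}, y = e^{v₁₃}, z = e^{v₁₂} and u = 2v, the dispersionless CKP relation (e^{u₂₃+u₁₃+u₁₂} − e^{u₂₃} − e^{u₁₃} − e^{u₁₂})² − 4(e^{u₁₃+u₂₃} + e^{u₁₂+u₁₃} + e^{u₁₂+u₂₃} − 2e^{u₂₃+u₁₃+u₁₂}) decouples into the product of the four dispersionless BKP-type factors (e^{v₂₃+v₁₃+v₁₂} ± e^{v₂₃} ± e^{v₁₃} ± e^{v₁₂}) with an even number of minus signs distributed as above. -/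
noncomputable section

/-- The algebraic identity behind the decoupling of the dispersionless CKP
equation into four dispersionless BKP-type factors: first the polynomial
identity in `x, y, z`, then its exponential specialisation with
`x = e^{v₂₃}, y = e^{v₁₃}, z = e^{v₁₂}` and `uᵢⱼ = 2vᵢⱼ`. -/
theorem ckp_decoupling :
    (∀ x y z : ℝ,
      (x ^ 2 * y ^ 2 * z ^ 2 - x ^ 2 - y ^ 2 - z ^ 2) ^ 2
        - 4 * (y ^ 2 * z ^ 2 + x ^ 2 * y ^ 2 + x ^ 2 * z ^ 2 - 2 * x ^ 2 * y ^ 2 * z ^ 2)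
      = (x * y * z + x + y + z) * (x * y * z - x - y + z) * (x * y * z - x + y - z)
        * (x * y * z + x - y - z))
    ∧ (∀ v23 v13 v12 : ℝ,
      (Real.exp (2 * v23 + 2 * v13 + 2 * v12) - Real.exp (2 * v23) - Real.exp (2 * v13)
          - Real.exp (2 * v12)) ^ 2
        - 4 * (Real.exp (2 * v13 + 2 * v23) + Real.exp (2 * v12 + 2 * v13)
            + Real.exp (2 * v12 + 2 * v23) - 2 * Real.exp (2 * v23 + 2 * v13 + 2 * v12))
      = (Real.exp (v23 + v13 + v12) + Real.exp v23 + Real.exp v13 + Real.exp v12)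
        * (Real.exp (v23 + v13 + v12) - Real.exp v23 - Real.exp v13 + Real.exp v12)
        * (Real.exp (v23 + v13 + v12) - Real.exp v23 + Real.exp v13 - Real.exp v12)
        * (Real.exp (v23 + v13 + v12) + Real.exp v23 - Real.exp v13 - Real.exp v12)) := by
  constructor
  · intro x y z; ring
  · intro v23 v13 v12
    have h := fun a b c : ℝ => Real.exp_add a b
    have e2 : ∀ a : ℝ, Real.exp (2*a) = Real.exp a ^ 2 := by
      intro a; rw [two_mul, Real.exp_add, sq]
    rw [show (2*v23+2*v13+2*v12 : ℝ) = 2*(v23+v13+v12) by ring] at *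
    rw [show (2*v13+2*v23 : ℝ) = 2*(v13+v23) by ring,
        show (2*v12+2*v13 : ℝ) = 2*(v12+v13) by ring,
        show (2*v12+2*v23 : ℝ) = 2*(v12+v23) by ring,
        e2, e2, e2, e2, e2, e2, e2,
        Real.exp_add, Real.exp_add, Real.exp_add, Real.exp_add, Real.exp_add]
    ring
end
end

section
/- Let f, g : ℝ → ℝ be twice continuously differentiable, let μ, λ : ℝ → ℝ be continuously differentiable, and suppose the dispersion relation λ(s)² = f′(s) + g′(s)·μ(s)² holds for all s ∈ ℝ. Let R : ℝ³ → ℝ (coordinates (x, y, t)) be twice continuously differentiable and satisfy the pair of Hopf-type equations ∂_y R = μ(R)·∂_x R and ∂_t R = λ(R)·∂_x R at every point. Then u = R is a solution of the quasilinear wave-type equation ∂_t² u − ∂_x²(f ∘ u) − ∂_y²(g ∘ u) = 0 at every point. -/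
noncomputable section

/-- Partial derivative in the first coordinate `x` of a function on ℝ³ with
coordinates `(x, y, t)`. -/
def px (F : ℝ × ℝ × ℝ → ℝ) : ℝ × ℝ × ℝ → ℝ :=
  fun p => deriv (fun s => F (s, p.2.1, p.2.2)) p.1

/-- Partial derivative in the second coordinate `y`. -/
def py (F : ℝ × ℝ × ℝ → ℝ) : ℝ × ℝ × ℝ → ℝ :=
  fun p => deriv (fun s => F (p.1, s, p.2.2)) p.2.1

/-- Partial derivative in the third coordinate `t`. -/
def pt (F : ℝ × ℝ × ℝ → ℝ) : ℝ × ℝ × ℝ → ℝ :=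
  fun p => deriv (fun s => F (p.1, p.2.1, s)) p.2.2

lemma hasDerivAt_lineX (F : ℝ × ℝ × ℝ → ℝ) (p : ℝ × ℝ × ℝ) (hF : DifferentiableAt ℝ F p) :
    HasDerivAt (fun s => F (s, p.2.1, p.2.2)) (fderiv ℝ F p (1, 0, 0)) p.1 := by
  have hι : HasDerivAt (fun s : ℝ => (s, p.2.1, p.2.2)) ((1:ℝ), (0:ℝ), (0:ℝ)) p.1 :=
    (hasDerivAt_id p.1).prodMk ((hasDerivAt_const _ _).prodMk (hasDerivAt_const _ _))
  exact hF.hasFDerivAt.comp_hasDerivAt p.1 hι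

lemma hasDerivAt_lineY (F : ℝ × ℝ × ℝ → ℝ) (p : ℝ × ℝ × ℝ) (hF : DifferentiableAt ℝ F p) :
    HasDerivAt (fun s => F (p.1, s, p.2.2)) (fderiv ℝ F p (0, 1, 0)) p.2.1 := by
  have hι : HasDerivAt (fun s : ℝ => (p.1, s, p.2.2)) ((0:ℝ), (1:ℝ), (0:ℝ)) p.2.1 :=
    (hasDerivAt_const _ _).prodMk ((hasDerivAt_id p.2.1).prodMk (hasDerivAt_const _ _))
  exact hF.hasFDerivAt.comp_hasDerivAt p.2.1 hι

lemma hasDerivAt_lineT (F : ℝ × ℝ × ℝ → ℝ) (p : ℝ × ℝ × ℝ) (hF : DifferentiableAt ℝ F p) :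
    HasDerivAt (fun s => F (p.1, p.2.1, s)) (fderiv ℝ F p (0, 0, 1)) p.2.2 := by
  have hι : HasDerivAt (fun s : ℝ => (p.1, p.2.1, s)) ((0:ℝ), (0:ℝ), (1:ℝ)) p.2.2 :=
    (hasDerivAt_const _ _).prodMk ((hasDerivAt_const _ _).prodMk (hasDerivAt_id p.2.2))
  exact hF.hasFDerivAt.comp_hasDerivAt p.2.2 hι

lemma px_eq_fderiv (F : ℝ × ℝ × ℝ → ℝ) (p : ℝ × ℝ × ℝ) (hF : DifferentiableAt ℝ F p) :
    px F p = fderiv ℝ F p (1, 0, 0) := (hasDerivAt_lineX F p hF).deriv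

lemma py_eq_fderiv (F : ℝ × ℝ × ℝ → ℝ) (p : ℝ × ℝ × ℝ) (hF : DifferentiableAt ℝ F p) :
    py F p = fderiv ℝ F p (0, 1, 0) := (hasDerivAt_lineY F p hF).deriv

lemma pt_eq_fderiv (F : ℝ × ℝ × ℝ → ℝ) (p : ℝ × ℝ × ℝ) (hF : DifferentiableAt ℝ F p) :
    pt F p = fderiv ℝ F p (0, 0, 1) := (hasDerivAt_lineT F p hF).deriv

lemma hasDerivAt_px_lineX (F : ℝ × ℝ × ℝ → ℝ) (p : ℝ × ℝ × ℝ) (hF : DifferentiableAt ℝ F p) :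
    HasDerivAt (fun s => F (s, p.2.1, p.2.2)) (px F p) p.1 := by
  rw [px_eq_fderiv F p hF]; exact hasDerivAt_lineX F p hF

lemma hasDerivAt_py_lineY (F : ℝ × ℝ × ℝ → ℝ) (p : ℝ × ℝ × ℝ) (hF : DifferentiableAt ℝ F p) :
    HasDerivAt (fun s => F (p.1, s, p.2.2)) (py F p) p.2.1 := by
  rw [py_eq_fderiv F p hF]; exact hasDerivAt_lineY F p hF

lemma hasDerivAt_pt_lineT (F : ℝ × ℝ × ℝ → ℝ) (p : ℝ × ℝ × ℝ) (hF : DifferentiableAt ℝ F p) :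
    HasDerivAt (fun s => F (p.1, p.2.1, s)) (pt F p) p.2.2 := by
  rw [pt_eq_fderiv F p hF]; exact hasDerivAt_lineT F p hF

/-- directional-derivative function `q ↦ fderiv R q v` has fderiv applying the
second derivative. -/
lemma hasFDerivAt_dirDeriv (R : ℝ × ℝ × ℝ → ℝ) (hR : ContDiff ℝ 2 R)
    (v : ℝ × ℝ × ℝ) (p : ℝ × ℝ × ℝ) :
    HasFDerivAt (fun q => fderiv ℝ R q v)
      ((ContinuousLinearMap.apply ℝ ℝ v).comp (fderiv ℝ (fderiv ℝ R) p)) p := by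
  have hfd : Differentiable ℝ (fderiv ℝ R) :=
    (hR.fderiv_right (m := 1) (by norm_num)).differentiable one_ne_zero
  exact (ContinuousLinearMap.apply ℝ ℝ v).hasFDerivAt.comp p (hfd p).hasFDerivAt

lemma dirDeriv_differentiable (R : ℝ × ℝ × ℝ → ℝ) (hR : ContDiff ℝ 2 R) (v : ℝ × ℝ × ℝ) :
    Differentiable ℝ (fun q => fderiv ℝ R q v) :=
  fun p => (hasFDerivAt_dirDeriv R hR v p).differentiableAt

lemma sndDeriv_symm (R : ℝ × ℝ × ℝ → ℝ) (hR : ContDiff ℝ 2 R) (p v w : ℝ × ℝ × ℝ) :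
    fderiv ℝ (fderiv ℝ R) p v w = fderiv ℝ (fderiv ℝ R) p w v := by
  have hfd : Differentiable ℝ (fderiv ℝ R) :=
    (hR.fderiv_right (m := 1) (by norm_num)).differentiable one_ne_zero
  exact second_derivative_symmetric
    (fun q => ((hR.differentiable two_ne_zero) q).hasFDerivAt) (hfd p).hasFDerivAt v w

/-- One-phase hydrodynamic reductions: if `R` satisfies the pair of Hopf-type
equations `R_y = μ(R) R_x`, `R_t = λ(R) R_x` with dispersion relation
`λ² = f′ + g′ μ²`, then `u = R` solves the quasilinear wave-type equation
`u_tt − (f∘u)_xx − (g∘u)_yy = 0`. -/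
theorem one_phase_reduction (f g μ lam : ℝ → ℝ)
    (hf : ContDiff ℝ 2 f) (hg : ContDiff ℝ 2 g)
    (hμ : ContDiff ℝ 1 μ) (hlam : ContDiff ℝ 1 lam)
    (hdisp : ∀ s : ℝ, (lam s) ^ 2 = deriv f s + deriv g s * (μ s) ^ 2)
    (R : ℝ × ℝ × ℝ → ℝ) (hR : ContDiff ℝ 2 R)
    (hy : ∀ p : ℝ × ℝ × ℝ, py R p = μ (R p) * px R p)
    (ht : ∀ p : ℝ × ℝ × ℝ, pt R p = lam (R p) * px R p) :
    ∀ p : ℝ × ℝ × ℝ,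
      pt (pt R) p - px (px (fun q => f (R q))) p - py (py (fun q => g (R q))) p = 0 := by
  intro p
  -- differentiability facts
  have hRd : Differentiable ℝ R := hR.differentiable two_ne_zero
  have hfd : Differentiable ℝ f := hf.differentiable two_ne_zero
  have hgd : Differentiable ℝ g := hg.differentiable two_ne_zero
  have hμd : Differentiable ℝ μ := hμ.differentiable one_ne_zero
  have hlamd : Differentiable ℝ lam := hlam.differentiable one_ne_zero
  have hdf : Differentiable ℝ (deriv f) := by
    have h2 : (2 : WithTop ℕ∞) = 1 + 1 := by norm_num
    exact ((contDiff_succ_iff_deriv.mp (h2 ▸ hf)).2.2).differentiable one_ne_zero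
  have hdg : Differentiable ℝ (deriv g) := by
    have h2 : (2 : WithTop ℕ∞) = 1 + 1 := by norm_num
    exact ((contDiff_succ_iff_deriv.mp (h2 ▸ hg)).2.2).differentiable one_ne_zero
  -- px R, py R, pt R are directional derivative functions
  have hpxR : px R = fun q => fderiv ℝ R q (1, 0, 0) :=
    funext fun q => px_eq_fderiv R q (hRd q)
  have hpyR : py R = fun q => fderiv ℝ R q (0, 1, 0) :=
    funext fun q => py_eq_fderiv R q (hRd q)
  have hptR : pt R = fun q => fderiv ℝ R q (0, 0, 1) :=
    funext fun q => pt_eq_fderiv R q (hRd q)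
  have hpxRd : Differentiable ℝ (px R) := hpxR ▸ dirDeriv_differentiable R hR _
  have hpyRd : Differentiable ℝ (py R) := hpyR ▸ dirDeriv_differentiable R hR _
  have hptRd : Differentiable ℝ (pt R) := hptR ▸ dirDeriv_differentiable R hR _
  -- symmetry of mixed partials
  have hcomm_tx : pt (px R) p = px (pt R) p := by
    rw [pt_eq_fderiv (px R) p (hpxRd p), px_eq_fderiv (pt R) p (hptRd p), hpxR, hptR,
      (hasFDerivAt_dirDeriv R hR (1,0,0) p).fderiv, (hasFDerivAt_dirDeriv R hR (0,0,1) p).fderiv]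
    exact sndDeriv_symm R hR p _ _
  have hcomm_yx : py (px R) p = px (py R) p := by
    rw [py_eq_fderiv (px R) p (hpxRd p), px_eq_fderiv (py R) p (hpyRd p), hpxR, hpyR,
      (hasFDerivAt_dirDeriv R hR (1,0,0) p).fderiv, (hasFDerivAt_dirDeriv R hR (0,1,0) p).fderiv]
    exact sndDeriv_symm R hR p _ _
  -- abbreviations
  set a := px R p with ha
  set b := px (px R) p with hb
  set L := lam (R p) with hL
  set L' := deriv lam (R p) with hL'
  set M := μ (R p) with hM
  set M' := deriv μ (R p) with hM'
  set F' := deriv f (R p) with hF'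
  set F'' := deriv (deriv f) (R p) with hF''
  set G' := deriv g (R p) with hG'
  set G'' := deriv (deriv g) (R p) with hG''
  -- lines through p
  have hRlX : HasDerivAt (fun s => R (s, p.2.1, p.2.2)) a p.1 := hasDerivAt_px_lineX R p (hRd p)
  have hRlY : HasDerivAt (fun s => R (p.1, s, p.2.2)) (py R p) p.2.1 :=
    hasDerivAt_py_lineY R p (hRd p)
  have hRlT : HasDerivAt (fun s => R (p.1, p.2.1, s)) (pt R p) p.2.2 :=
    hasDerivAt_pt_lineT R p (hRd p)
  have hpxlX : HasDerivAt (fun s => px R (s, p.2.1, p.2.2)) b p.1 :=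
    hasDerivAt_px_lineX (px R) p (hpxRd p)
  have hpxlY : HasDerivAt (fun s => px R (p.1, s, p.2.2)) (py (px R) p) p.2.1 :=
    hasDerivAt_py_lineY (px R) p (hpxRd p)
  have hpxlT : HasDerivAt (fun s => px R (p.1, p.2.1, s)) (pt (px R) p) p.2.2 :=
    hasDerivAt_pt_lineT (px R) p (hpxRd p)
  -- px (py R) p and px (pt R) p via product rule along X line
  have hpxpy : px (py R) p = M' * a * a + M * b := by
    have h1 : HasDerivAt (fun s => μ (R (s, p.2.1, p.2.2))) (M' * a) p.1 :=
      (hμd (R p)).hasDerivAt.comp p.1 hRlX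
    have h2 := h1.fun_mul hpxlX
    have h3 : px (py R) p =
        deriv (fun s => μ (R (s, p.2.1, p.2.2)) * px R (s, p.2.1, p.2.2)) p.1 := by
      show deriv (fun s => py R (s, p.2.1, p.2.2)) p.1 = _
      congr 1; funext s; exact hy _
    rw [h3, h2.deriv]
  have hpxpt : px (pt R) p = L' * a * a + L * b := by
    have h1 : HasDerivAt (fun s => lam (R (s, p.2.1, p.2.2))) (L' * a) p.1 :=
      (hlamd (R p)).hasDerivAt.comp p.1 hRlX
    have h2 := h1.fun_mul hpxlX
    have h3 : px (pt R) p =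
        deriv (fun s => lam (R (s, p.2.1, p.2.2)) * px R (s, p.2.1, p.2.2)) p.1 := by
      show deriv (fun s => pt R (s, p.2.1, p.2.2)) p.1 = _
      congr 1; funext s; exact ht _
    rw [h3, h2.deriv]
  -- t-t second derivative
  have htt : pt (pt R) p = L' * (L * a) * a + L * (L' * a * a + L * b) := by
    have h1 : HasDerivAt (fun s => lam (R (p.1, p.2.1, s))) (L' * pt R p) p.2.2 :=
      (hlamd (R p)).hasDerivAt.comp p.2.2 hRlT
    have h2 := h1.fun_mul hpxlT
    have h3 : pt (pt R) p =
        deriv (fun s => lam (R (p.1, p.2.1, s)) * px R (p.1, p.2.1, s)) p.2.2 := by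
      show deriv (fun s => pt R (p.1, p.2.1, s)) p.2.2 = _
      congr 1; funext s; exact ht _
    rw [h3, h2.deriv, ht p, ← ha, ← hL, hcomm_tx, hpxpt]
  -- x-x second derivative of f ∘ R
  have hfxx : px (px (fun q => f (R q))) p = F'' * a * a + F' * b := by
    have hfx : ∀ q : ℝ × ℝ × ℝ, px (fun q' => f (R q')) q = deriv f (R q) * px R q := by
      intro q
      have h1 : HasDerivAt (fun s => R (s, q.2.1, q.2.2)) (px R q) q.1 :=
        hasDerivAt_px_lineX R q (hRd q)
      have h2 := (hfd (R q)).hasDerivAt.comp q.1 h1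
      exact h2.deriv
    have h1 : HasDerivAt (fun s => deriv f (R (s, p.2.1, p.2.2))) (F'' * a) p.1 :=
      (hdf (R p)).hasDerivAt.comp (h₂ := deriv f) p.1 hRlX
    have h2 := h1.fun_mul hpxlX
    have h3 : px (px (fun q => f (R q))) p =
        deriv (fun s => deriv f (R (s, p.2.1, p.2.2)) * px R (s, p.2.1, p.2.2)) p.1 := by
      show deriv (fun s => px (fun q => f (R q)) (s, p.2.1, p.2.2)) p.1 = _
      congr 1; funext s; exact hfx _
    rw [h3, h2.deriv]
  -- y-y second derivative of g ∘ R
  have hgyy : py (py (fun q => g (R q))) p =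
      G'' * (M * a) * (M * a) + G' * ((M' * (M * a)) * a + M * (M' * a * a + M * b)) := by
    have hgy : ∀ q : ℝ × ℝ × ℝ,
        py (fun q' => g (R q')) q = deriv g (R q) * (μ (R q) * px R q) := by
      intro q
      have h1 : HasDerivAt (fun s => R (q.1, s, q.2.2)) (py R q) q.2.1 :=
        hasDerivAt_py_lineY R q (hRd q)
      have h2 := (hgd (R q)).hasDerivAt.comp q.2.1 h1
      have := h2.deriv
      rw [hy q] at this
      exact this
    have h1 : HasDerivAt (fun s => deriv g (R (p.1, s, p.2.2))) (G'' * py R p) p.2.1 :=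
      (hdg (R p)).hasDerivAt.comp (h₂ := deriv g) p.2.1 hRlY
    have hμl : HasDerivAt (fun s => μ (R (p.1, s, p.2.2))) (M' * py R p) p.2.1 :=
      (hμd (R p)).hasDerivAt.comp p.2.1 hRlY
    have h2 := h1.fun_mul (hμl.fun_mul hpxlY)
    have h3 : py (py (fun q => g (R q))) p =
        deriv (fun s => deriv g (R (p.1, s, p.2.2)) *
          (μ (R (p.1, s, p.2.2)) * px R (p.1, s, p.2.2))) p.2.1 := by
      show deriv (fun s => py (fun q => g (R q)) (p.1, s, p.2.2)) p.2.1 = _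
      congr 1; funext s; exact hgy _
    rw [h3, h2.deriv, hy p, ← ha, ← hM, hcomm_yx, hpxpy]
  -- differentiated dispersion relation
  have hdd : 2 * L * L' = F'' + G'' * M ^ 2 + G' * (2 * M * M') := by
    have h1 : HasDerivAt (fun s => lam s ^ 2) (2 * lam (R p) * deriv lam (R p)) (R p) := by
      have := (hlamd (R p)).hasDerivAt.fun_pow 2
      simpa [mul_comm, mul_assoc, mul_left_comm] using this
    have h2 : HasDerivAt (fun s => deriv f s + deriv g s * μ s ^ 2)
        (deriv (deriv f) (R p) + (deriv (deriv g) (R p) * μ (R p) ^ 2 +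
          deriv g (R p) * (2 * μ (R p) * deriv μ (R p)))) (R p) := by
      have hμsq : HasDerivAt (fun s => μ s ^ 2) (2 * μ (R p) * deriv μ (R p)) (R p) := by
        have := (hμd (R p)).hasDerivAt.fun_pow 2
        simpa [mul_comm, mul_assoc, mul_left_comm] using this
      exact (hdf (R p)).hasDerivAt.add ((hdg (R p)).hasDerivAt.mul hμsq)
    have heq : (fun s => lam s ^ 2) = fun s => deriv f s + deriv g s * μ s ^ 2 :=
      funext hdisp
    have h1' : HasDerivAt (fun s => deriv f s + deriv g s * μ s ^ 2)
        (2 * lam (R p) * deriv lam (R p)) (R p) := heq ▸ h1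
    have := h1'.unique h2
    rw [← hL, ← hL', ← hF'', ← hG'', ← hG', ← hM, ← hM'] at this
    linarith [this]
  have hd1 : L ^ 2 = F' + G' * M ^ 2 := hdisp (R p)
  rw [htt, hfxx, hgyy]
  linear_combination (a * a) * hdd + b * hd1
end
end

section
/- Let α, β, γ be real constants and set P(s) = αs² + βs + γ. Let p, q, r : ℝ → ℝ be differentiable functions satisfying p′ = P ∘ p, q′ = P ∘ q, r′ = P ∘ r (so that p, q, r are automatically twice differentiable). Then for all a, b, c ∈ ℝ such that p(a), q(b), r(c) are pairwise distinct, the three integrability conditions hold: p″(a) = p′(a)·[(p′(a) − q′(b))/(p(a) − q(b)) + (p′(a) − r′(c))/(p(a) − r(c)) − (q′(b) − r′(c))/(q(b) − r(c))], q″(b) = q′(b)·[(q′(b) − p′(a))/(q(b) − p(a)) + (q′(b) − r′(c))/(q(b) − r(c)) − (p′(a) − r′(c))/(p(a) − r(c))], and r″(c) = r′(c)·[(r′(c) − p′(a))/(r(c) − p(a)) + (r′(c) − q′(b))/(r(c) − q(b)) − (p′(a) − q′(b))/(p(a) − q(b))]. -/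
noncomputable section

private lemma riccati_second_deriv (α β γ : ℝ) (p : ℝ → ℝ)
    (hp : Differentiable ℝ p)
    (hp' : ∀ s : ℝ, deriv p s = α * (p s) ^ 2 + β * p s + γ) (a : ℝ) :
    deriv (deriv p) a = (2 * α * p a + β) * deriv p a := by
  have hdp : deriv p = fun s => α * (p s) ^ 2 + β * p s + γ := funext hp'
  have h : HasDerivAt (fun s => α * (p s) ^ 2 + β * p s + γ)
      ((2 * α * p a + β) * deriv p a) a := by
    have h1 := (hp a).hasDerivAt
    have := (((h1.pow 2).const_mul α).add (h1.const_mul β)).add_const γ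
    refine this.congr_deriv ?_
    push_cast
    ring
  rw [hdp, h.deriv]; simp only []; rw [hp' a]

private lemma riccati_quot (α β γ : ℝ) (x y : ℝ) (h : x ≠ y) :
    ((α * x ^ 2 + β * x + γ) - (α * y ^ 2 + β * y + γ)) / (x - y)
      = α * (x + y) + β := by
  have hxy : x - y ≠ 0 := sub_ne_zero.mpr h
  field_simp
  ring

/-- If `p, q, r` all satisfy the same Riccati-type ODE `y′ = α y² + β y + γ`,
then they satisfy the three integrability conditions of the quasilinear
equation `[p(u₁) − q(u₂)]u₁₂ + [r(u₃) − p(u₁)]u₁₃ + [q(u₂) − r(u₃)]u₂₃ = 0`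
wherever `p(a), q(b), r(c)` are pairwise distinct. -/
theorem riccati_integrability_conditions (α β γ : ℝ) (p q r : ℝ → ℝ)
    (hp : Differentiable ℝ p) (hq : Differentiable ℝ q) (hr : Differentiable ℝ r)
    (hp' : ∀ s : ℝ, deriv p s = α * (p s) ^ 2 + β * p s + γ)
    (hq' : ∀ s : ℝ, deriv q s = α * (q s) ^ 2 + β * q s + γ)
    (hr' : ∀ s : ℝ, deriv r s = α * (r s) ^ 2 + β * r s + γ) :
    ∀ a b c : ℝ, p a ≠ q b → p a ≠ r c → q b ≠ r c →
      (deriv (deriv p) a = deriv p a *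
          ((deriv p a - deriv q b) / (p a - q b) + (deriv p a - deriv r c) / (p a - r c)
            - (deriv q b - deriv r c) / (q b - r c)))
      ∧ (deriv (deriv q) b = deriv q b *
          ((deriv q b - deriv p a) / (q b - p a) + (deriv q b - deriv r c) / (q b - r c)
            - (deriv p a - deriv r c) / (p a - r c)))
      ∧ (deriv (deriv r) c = deriv r c *
          ((deriv r c - deriv p a) / (r c - p a) + (deriv r c - deriv q b) / (r c - q b)
            - (deriv p a - deriv q b) / (p a - q b))) := by
  intro a b c hpq hpr hqr
  have h2p := riccati_second_deriv α β γ p hp hp' a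
  have h2q := riccati_second_deriv α β γ q hq hq' b
  have h2r := riccati_second_deriv α β γ r hr hr' c
  have Qpq := riccati_quot α β γ (p a) (q b) hpq
  have Qpr := riccati_quot α β γ (p a) (r c) hpr
  have Qqr := riccati_quot α β γ (q b) (r c) hqr
  have Qqp := riccati_quot α β γ (q b) (p a) hpq.symm
  have Qrp := riccati_quot α β γ (r c) (p a) hpr.symm
  have Qrq := riccati_quot α β γ (r c) (q b) hqr.symm
  rw [hp' a, hq' b, hr' c] at *
  refine ⟨?_, ?_, ?_⟩
  · rw [h2p, Qpq, Qpr, Qqr]; ring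
  · rw [h2q, Qqp, Qqr, Qpr]; ring
  · rw [h2r, Qrp, Qrq, Qpq]; ring
end
end

section
/- Let I₁, I₂, I₃ ⊆ ℝ be open intervals and let p : I₁ → ℝ, q : I₂ → ℝ, r : I₃ → ℝ be three times continuously differentiable functions whose derivatives p′, q′, r′ are nowhere zero, and suppose that for all a ∈ I₁, b ∈ I₂, c ∈ I₃ the values p(a), q(b), r(c) are pairwise distinct and the three integrability conditions hold: p″ = p′[(p′−q′)/(p−q) + (p′−r′)/(p−r) − (q′−r′)/(q−r)], q″ = q′[(q′−p′)/(q−p) + (q′−r′)/(q−r) − (p′−r′)/(p−r)], r″ = r′[(r′−p′)/(r−p) + (r′−q′)/(r−q) − (p′−q′)/(p−q)] (evaluated at (a, b, c)). Then there exist real constants α, β, γ such that p′ = α p² + β p + γ on I₁, q′ = α q² + β q + γ on I₂, and r′ = α r² + β r + γ on I₃. -/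
noncomputable section

open Set

private theorem algA (X z y₁ y₂ P R Q₁ Q₂ P'' K : ℝ)
    (h1 : X ≠ y₁) (h2 : X ≠ y₂) (h3 : X ≠ z) (h4 : y₁ ≠ z) (h5 : y₂ ≠ z) (h6 : y₁ ≠ y₂)
    (hP : P ≠ 0)
    (hK : K = (Q₁ - R)/(y₁ - z) - (Q₂ - R)/(y₂ - z))
    (e₁ : P'' = P * ((P - Q₁)/(X - y₁) + (P - R)/(X - z) - (Q₁ - R)/(y₁ - z)))
    (e₂ : P'' = P * ((P - Q₂)/(X - y₂) + (P - R)/(X - z) - (Q₂ - R)/(y₂ - z))) :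
    P = K/(y₁-y₂) * X^2 + (Q₁ - Q₂ - K*(y₁+y₂))/(y₁-y₂) * X
      + (K*y₁*y₂ - Q₁*y₂ + Q₂*y₁)/(y₁-y₂) := by
  have h12 := mul_left_cancel₀ hP (e₁.symm.trans e₂)
  have hXy1 : X - y₁ ≠ 0 := sub_ne_zero.2 h1
  have hXy2 : X - y₂ ≠ 0 := sub_ne_zero.2 h2
  have hXz : X - z ≠ 0 := sub_ne_zero.2 h3
  have hy1z : y₁ - z ≠ 0 := sub_ne_zero.2 h4
  have hy2z : y₂ - z ≠ 0 := sub_ne_zero.2 h5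
  have hy12 : y₁ - y₂ ≠ 0 := sub_ne_zero.2 h6
  have h3' : (P - Q₁)/(X - y₁) - (Q₁ - R)/(y₁ - z)
      = (P - Q₂)/(X - y₂) - (Q₂ - R)/(y₂ - z) := by linarith
  have hpoly : (P - Q₁)*(X-y₂)*((y₁-z)*(y₂-z)) - (Q₁-R)*((X-y₁)*(X-y₂))*(y₂-z)
      = (P-Q₂)*(X-y₁)*((y₁-z)*(y₂-z)) - (Q₂-R)*((X-y₁)*(X-y₂))*(y₁-z) := by
    field_simp at h3'
    linear_combination h3'
  subst hK
  field_simp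
  linear_combination hpoly

private theorem algB (α β γ y z x₁ x₂ Q R Q'' : ℝ)
    (h1 : y ≠ x₁) (h2 : y ≠ x₂) (h3 : y ≠ z) (h4 : x₁ ≠ z) (h5 : x₂ ≠ z) (h6 : x₁ ≠ x₂)
    (hQ : Q ≠ 0)
    (e₁ : Q'' = Q * ((Q - (α*x₁^2 + β*x₁ + γ))/(y - x₁) + (Q - R)/(y - z)
      - ((α*x₁^2 + β*x₁ + γ) - R)/(x₁ - z)))
    (e₂ : Q'' = Q * ((Q - (α*x₂^2 + β*x₂ + γ))/(y - x₂) + (Q - R)/(y - z)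
      - ((α*x₂^2 + β*x₂ + γ) - R)/(x₂ - z))) :
    (Q - (α*y^2 + β*y + γ)) * ((x₁-z)*(x₂-z)) = (R - (α*z^2 + β*z + γ)) * ((y-x₁)*(y-x₂)) := by
  have h12 := mul_left_cancel₀ hQ (e₁.symm.trans e₂)
  have hyx1 : y - x₁ ≠ 0 := sub_ne_zero.2 h1
  have hyx2 : y - x₂ ≠ 0 := sub_ne_zero.2 h2
  have hyz : y - z ≠ 0 := sub_ne_zero.2 h3
  have hx1z : x₁ - z ≠ 0 := sub_ne_zero.2 h4
  have hx2z : x₂ - z ≠ 0 := sub_ne_zero.2 h5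
  have hx12 : x₁ - x₂ ≠ 0 := sub_ne_zero.2 h6
  have h3' : (Q - (α*x₁^2 + β*x₁ + γ))/(y - x₁) - ((α*x₁^2 + β*x₁ + γ) - R)/(x₁ - z)
      = (Q - (α*x₂^2 + β*x₂ + γ))/(y - x₂) - ((α*x₂^2 + β*x₂ + γ) - R)/(x₂ - z) := by
    linarith
  have hpoly : (Q - (α*x₁^2 + β*x₁ + γ))*(y-x₂)*((x₁-z)*(x₂-z))
        - ((α*x₁^2 + β*x₁ + γ) - R)*((y-x₁)*(y-x₂))*(x₂-z)
      = (Q - (α*x₂^2 + β*x₂ + γ))*(y-x₁)*((x₁-z)*(x₂-z))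
        - ((α*x₂^2 + β*x₂ + γ) - R)*((y-x₁)*(y-x₂))*(x₁-z) := by
    field_simp at h3'
    linear_combination h3'
  have key : ((Q - (α*y^2 + β*y + γ)) * ((x₁-z)*(x₂-z))
      - (R - (α*z^2 + β*z + γ)) * ((y-x₁)*(y-x₂))) * (x₁ - x₂) = 0 := by
    linear_combination hpoly
  rcases mul_eq_zero.1 key with h | h
  · linarith [sub_eq_zero.1 h]
  · exact absurd h hx12

private theorem algC (y z x₁ x₂ x₃ D E : ℝ)
    (h3 : y ≠ z) (h23 : x₂ ≠ x₃) (hx1z : x₁ - z ≠ 0)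
    (e₁ : D * ((x₁-z)*(x₂-z)) = E * ((y-x₁)*(y-x₂)))
    (e₂ : D * ((x₁-z)*(x₃-z)) = E * ((y-x₁)*(y-x₃))) :
    D = 0 := by
  have key : D * ((x₁ - z) * ((y - z) * (x₂ - x₃))) = 0 := by
    linear_combination (y - x₃) * e₁ - (y - x₂) * e₂
  have hne : (x₁ - z) * ((y - z) * (x₂ - x₃)) ≠ 0 :=
    mul_ne_zero hx1z (mul_ne_zero (sub_ne_zero.2 h3) (sub_ne_zero.2 h23))
  exact (mul_eq_zero.1 key).resolve_right hne

private theorem inj_aux {I : Set ℝ} (hc : I.OrdConnected) {f : ℝ → ℝ}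
    (hf : ContinuousOn f I) (hf' : ∀ x ∈ I, deriv f x ≠ 0)
    {u v : ℝ} (hu : u ∈ I) (hv : v ∈ I) (huv : u ≠ v) : f u ≠ f v := by
  intro hfe
  rcases huv.lt_or_gt with h | h
  · obtain ⟨ξ, hξ, h0⟩ := exists_deriv_eq_zero h (hf.mono (hc.out hu hv)) hfe
    exact hf' ξ (hc.out hu hv ⟨hξ.1.le, hξ.2.le⟩) h0
  · obtain ⟨ξ, hξ, h0⟩ := exists_deriv_eq_zero h (hf.mono (hc.out hv hu)) hfe.symm
    exact hf' ξ (hc.out hv hu ⟨hξ.1.le, hξ.2.le⟩) h0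

/-- If `p, q, r` are C³ functions on open intervals with nowhere-vanishing
derivatives, pairwise distinct values, and satisfying the integrability
conditions of the quasilinear equation
`[p(u₁) − q(u₂)]u₁₂ + [r(u₃) − p(u₁)]u₁₃ + [q(u₂) − r(u₃)]u₂₃ = 0`, then there
exist constants `α, β, γ` with `p′ = αp² + βp + γ`, `q′ = αq² + βq + γ`,
`r′ = αr² + βr + γ` on the respective intervals. -/
theorem integrability_conditions_imply_riccati
    (I₁ I₂ I₃ : Set ℝ)
    (hI₁ : IsOpen I₁) (hI₂ : IsOpen I₂) (hI₃ : IsOpen I₃)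
    (hc₁ : I₁.OrdConnected) (hc₂ : I₂.OrdConnected) (hc₃ : I₃.OrdConnected)
    (hn₁ : I₁.Nonempty) (hn₂ : I₂.Nonempty) (hn₃ : I₃.Nonempty)
    (p q r : ℝ → ℝ)
    (hp : ContDiffOn ℝ 3 p I₁) (hq : ContDiffOn ℝ 3 q I₂) (hr : ContDiffOn ℝ 3 r I₃)
    (hp' : ∀ a ∈ I₁, deriv p a ≠ 0) (hq' : ∀ b ∈ I₂, deriv q b ≠ 0)
    (hr' : ∀ c ∈ I₃, deriv r c ≠ 0)
    (hdist : ∀ a ∈ I₁, ∀ b ∈ I₂, ∀ c ∈ I₃,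
      p a ≠ q b ∧ p a ≠ r c ∧ q b ≠ r c)
    (hint : ∀ a ∈ I₁, ∀ b ∈ I₂, ∀ c ∈ I₃,
      (deriv (deriv p) a = deriv p a *
          ((deriv p a - deriv q b) / (p a - q b) + (deriv p a - deriv r c) / (p a - r c)
            - (deriv q b - deriv r c) / (q b - r c)))
      ∧ (deriv (deriv q) b = deriv q b *
          ((deriv q b - deriv p a) / (q b - p a) + (deriv q b - deriv r c) / (q b - r c)
            - (deriv p a - deriv r c) / (p a - r c)))
      ∧ (deriv (deriv r) c = deriv r c *
          ((deriv r c - deriv p a) / (r c - p a) + (deriv r c - deriv q b) / (r c - q b)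
            - (deriv p a - deriv q b) / (p a - q b)))) :
    ∃ α β γ : ℝ,
      (∀ a ∈ I₁, deriv p a = α * (p a) ^ 2 + β * p a + γ)
      ∧ (∀ b ∈ I₂, deriv q b = α * (q b) ^ 2 + β * q b + γ)
      ∧ (∀ c ∈ I₃, deriv r c = α * (r c) ^ 2 + β * r c + γ) := by
  obtain ⟨a₀, ha₀⟩ := hn₁
  obtain ⟨b₀, hb₀⟩ := hn₂
  obtain ⟨c₀, hc₀⟩ := hn₃
  -- three distinct points of I₁
  obtain ⟨ε, hε, hball⟩ := Metric.isOpen_iff.mp hI₁ a₀ ha₀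
  have memI₁ : ∀ t : ℝ, 0 ≤ t → t < ε → a₀ + t ∈ I₁ := by
    intro t ht1 ht2
    exact hball (by
      rw [Metric.mem_ball, Real.dist_eq, show a₀ + t - a₀ = t by ring, abs_of_nonneg ht1]
      exact ht2)
  have ha₁ : a₀ ∈ I₁ := ha₀
  have ha₂ : a₀ + ε/2 ∈ I₁ := memI₁ _ (by linarith) (by linarith)
  have ha₃ : a₀ + 3*ε/4 ∈ I₁ := memI₁ _ (by linarith) (by linarith)
  -- two distinct points of I₂
  obtain ⟨δ, hδ, hball₂⟩ := Metric.isOpen_iff.mp hI₂ b₀ hb₀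
  have hb₂ : b₀ + δ/2 ∈ I₂ := hball₂ (by
    rw [Metric.mem_ball, Real.dist_eq, show b₀ + δ/2 - b₀ = δ/2 by ring,
      abs_of_nonneg (by linarith)]
    linarith)
  -- injectivity
  have hpinj : ∀ u ∈ I₁, ∀ v ∈ I₁, u ≠ v → p u ≠ p v := fun u hu v hv huv =>
    inj_aux hc₁ hp.continuousOn hp' hu hv huv
  have hqinj : ∀ u ∈ I₂, ∀ v ∈ I₂, u ≠ v → q u ≠ q v := fun u hu v hv huv =>
    inj_aux hc₂ hq.continuousOn hq' hu hv huv
  have hx12 : p a₀ ≠ p (a₀ + ε/2) := hpinj _ ha₁ _ ha₂ (ne_of_lt (by linarith))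
  have hx13 : p a₀ ≠ p (a₀ + 3*ε/4) := hpinj _ ha₁ _ ha₃ (ne_of_lt (by linarith))
  have hx23 : p (a₀ + ε/2) ≠ p (a₀ + 3*ε/4) := hpinj _ ha₂ _ ha₃ (ne_of_lt (by linarith))
  have hy12 : q b₀ ≠ q (b₀ + δ/2) := hqinj _ hb₀ _ hb₂ (ne_of_lt (by linarith))
  -- constants
  obtain ⟨K, hK⟩ : ∃ K : ℝ, K = (deriv q b₀ - deriv r c₀)/(q b₀ - r c₀)
      - (deriv q (b₀ + δ/2) - deriv r c₀)/(q (b₀ + δ/2) - r c₀) := ⟨_, rfl⟩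
  obtain ⟨α, β, γ, hαβγ⟩ : ∃ α β γ : ℝ, α = K/(q b₀ - q (b₀ + δ/2))
      ∧ β = (deriv q b₀ - deriv q (b₀ + δ/2) - K*(q b₀ + q (b₀ + δ/2)))/(q b₀ - q (b₀ + δ/2))
      ∧ γ = (K*(q b₀)*(q (b₀ + δ/2)) - (deriv q b₀)*(q (b₀ + δ/2))
        + (deriv q (b₀ + δ/2))*(q b₀))/(q b₀ - q (b₀ + δ/2)) := ⟨_, _, _, rfl, rfl, rfl⟩
  obtain ⟨hα, hβ, hγ⟩ := hαβγ
  have claimP : ∀ a ∈ I₁, deriv p a = α * (p a) ^ 2 + β * p a + γ := by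
    intro a ha
    obtain ⟨pq₁, pr, qr₁⟩ := hdist a ha b₀ hb₀ c₀ hc₀
    obtain ⟨pq₂, -, qr₂⟩ := hdist a ha (b₀ + δ/2) hb₂ c₀ hc₀
    rw [hα, hβ, hγ]
    exact algA (p a) (r c₀) (q b₀) (q (b₀ + δ/2)) (deriv p a) (deriv r c₀) (deriv q b₀)
      (deriv q (b₀ + δ/2)) (deriv (deriv p) a) K pq₁ pq₂ pr qr₁ qr₂ hy12 (hp' a ha) hK
      (hint a ha b₀ hb₀ c₀ hc₀).1 (hint a ha (b₀ + δ/2) hb₂ c₀ hc₀).1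
  have claimQ : ∀ b ∈ I₂, deriv q b = α * (q b) ^ 2 + β * q b + γ := by
    intro b hb
    obtain ⟨pq₁, pr₁, qr⟩ := hdist a₀ ha₁ b hb c₀ hc₀
    obtain ⟨pq₂, pr₂, -⟩ := hdist (a₀ + ε/2) ha₂ b hb c₀ hc₀
    obtain ⟨pq₃, pr₃, -⟩ := hdist (a₀ + 3*ε/4) ha₃ b hb c₀ hc₀
    have e₁ := (hint a₀ ha₁ b hb c₀ hc₀).2.1
    have e₂ := (hint (a₀ + ε/2) ha₂ b hb c₀ hc₀).2.1
    have e₃ := (hint (a₀ + 3*ε/4) ha₃ b hb c₀ hc₀).2.1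
    rw [claimP a₀ ha₁] at e₁
    rw [claimP (a₀ + ε/2) ha₂] at e₂
    rw [claimP (a₀ + 3*ε/4) ha₃] at e₃
    have hB₁ := algB α β γ (q b) (r c₀) (p a₀) (p (a₀ + ε/2)) (deriv q b) (deriv r c₀)
      (deriv (deriv q) b) pq₁.symm pq₂.symm qr pr₁ pr₂ hx12 (hq' b hb) e₁ e₂
    have hB₂ := algB α β γ (q b) (r c₀) (p a₀) (p (a₀ + 3*ε/4)) (deriv q b) (deriv r c₀)
      (deriv (deriv q) b) pq₁.symm pq₃.symm qr pr₁ pr₃ hx13 (hq' b hb) e₁ e₃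
    have hD := algC (q b) (r c₀) (p a₀) (p (a₀ + ε/2)) (p (a₀ + 3*ε/4)) _ _ qr hx23
      (sub_ne_zero.2 pr₁) hB₁ hB₂
    linarith [hD]
  have claimR : ∀ c ∈ I₃, deriv r c = α * (r c) ^ 2 + β * r c + γ := by
    intro c hc
    obtain ⟨pq₁, pr₁, qr₁⟩ := hdist a₀ ha₁ b₀ hb₀ c hc
    obtain ⟨pq₂, pr₂, qr₂⟩ := hdist (a₀ + ε/2) ha₂ b₀ hb₀ c hc
    have e₁ := (hint a₀ ha₁ b₀ hb₀ c hc).2.2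
    have e₂ := (hint (a₀ + ε/2) ha₂ b₀ hb₀ c hc).2.2
    rw [claimP a₀ ha₁] at e₁
    rw [claimP (a₀ + ε/2) ha₂] at e₂
    have hB := algB α β γ (r c) (q b₀) (p a₀) (p (a₀ + ε/2)) (deriv r c) (deriv q b₀)
      (deriv (deriv r) c) pr₁.symm pr₂.symm qr₁.symm pq₁ pq₂ hx12 (hr' c hc) e₁ e₂
    have hQ0 : deriv q b₀ - (α * (q b₀) ^ 2 + β * q b₀ + γ) = 0 := by
      have := claimQ b₀ hb₀; linarith
    rw [show (deriv q b₀ - (α*(q b₀)^2 + β*(q b₀) + γ)) = 0 from hQ0, zero_mul] at hB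
    have hne : (p a₀ - q b₀) * (p (a₀ + ε/2) - q b₀) ≠ 0 :=
      mul_ne_zero (sub_ne_zero.2 pq₁) (sub_ne_zero.2 pq₂)
    have := (mul_eq_zero.1 hB).resolve_right hne
    linarith [this]
  exact ⟨α, β, γ, claimP, claimQ, claimR⟩
end
end

section
/- Let Ω ⊆ ℝ³ be open and let u : Ω → ℝ be twice continuously differentiable. Suppose that on Ω the first derivative u₁ is nonzero and the quantities 1 − u₃/u₁ and u₂/u₁ − 1 are positive, and that u satisfies the dispersionless Schwarzian KP equation u₃(u₂ − u₁)u₁₂ + u₂(u₁ − u₃)u₁₃ + u₁(u₃ − u₂)u₂₃ = 0 on Ω. Then the conservation law ∂₂ log(1 − u₃/u₁) − ∂₃ log(u₂/u₁ − 1) = 0 holds on Ω. -/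
noncomputable section

/-- Partial derivative in the first coordinate of a function on ℝ³. -/
def p1 (F : ℝ × ℝ × ℝ → ℝ) : ℝ × ℝ × ℝ → ℝ :=
  fun p => deriv (fun s => F (s, p.2.1, p.2.2)) p.1

/-- Partial derivative in the second coordinate. -/
def p2 (F : ℝ × ℝ × ℝ → ℝ) : ℝ × ℝ × ℝ → ℝ :=
  fun p => deriv (fun s => F (p.1, s, p.2.2)) p.2.1

/-- Partial derivative in the third coordinate. -/
def p3 (F : ℝ × ℝ × ℝ → ℝ) : ℝ × ℝ × ℝ → ℝ :=
  fun p => deriv (fun s => F (p.1, p.2.1, s)) p.2.2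

private lemma hasDerivAt_slice1 (G : ℝ × ℝ × ℝ → ℝ) (p : ℝ × ℝ × ℝ)
    (hG : DifferentiableAt ℝ G p) :
    HasDerivAt (fun s => G (s, p.2.1, p.2.2)) (fderiv ℝ G p (1, 0, 0)) p.1 := by
  have h : HasDerivAt (fun s : ℝ => ((s, p.2.1, p.2.2) : ℝ × ℝ × ℝ)) (1, 0, 0) p.1 :=
    (hasDerivAt_id p.1).prodMk (hasDerivAt_const _ _)
  exact hG.hasFDerivAt.comp_hasDerivAt p.1 h

private lemma hasDerivAt_slice2 (G : ℝ × ℝ × ℝ → ℝ) (p : ℝ × ℝ × ℝ)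
    (hG : DifferentiableAt ℝ G p) :
    HasDerivAt (fun s => G (p.1, s, p.2.2)) (fderiv ℝ G p (0, 1, 0)) p.2.1 := by
  have h : HasDerivAt (fun s : ℝ => ((p.1, s, p.2.2) : ℝ × ℝ × ℝ)) (0, 1, 0) p.2.1 :=
    (hasDerivAt_const _ _).prodMk ((hasDerivAt_id p.2.1).prodMk (hasDerivAt_const _ _))
  exact hG.hasFDerivAt.comp_hasDerivAt p.2.1 h

private lemma hasDerivAt_slice3 (G : ℝ × ℝ × ℝ → ℝ) (p : ℝ × ℝ × ℝ)
    (hG : DifferentiableAt ℝ G p) :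
    HasDerivAt (fun s => G (p.1, p.2.1, s)) (fderiv ℝ G p (0, 0, 1)) p.2.2 := by
  have h : HasDerivAt (fun s : ℝ => ((p.1, p.2.1, s) : ℝ × ℝ × ℝ)) (0, 0, 1) p.2.2 :=
    (hasDerivAt_const _ _).prodMk ((hasDerivAt_const _ _).prodMk (hasDerivAt_id p.2.2))
  exact hG.hasFDerivAt.comp_hasDerivAt p.2.2 h

private lemma p1_congr {Ω : Set (ℝ × ℝ × ℝ)} (hΩ : IsOpen Ω) {F G : ℝ × ℝ × ℝ → ℝ}
    (h : ∀ q ∈ Ω, F q = G q) {p : ℝ × ℝ × ℝ} (hp : p ∈ Ω) : p1 F p = p1 G p := by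
  have hc : Continuous fun s : ℝ => ((s, p.2.1, p.2.2) : ℝ × ℝ × ℝ) := by fun_prop
  have hev : (fun s => F (s, p.2.1, p.2.2)) =ᶠ[nhds p.1] fun s => G (s, p.2.1, p.2.2) := by
    filter_upwards [hc.continuousAt.preimage_mem_nhds (hΩ.mem_nhds hp)] with s hs
    exact h _ hs
  exact hev.deriv_eq

private lemma p2_congr {Ω : Set (ℝ × ℝ × ℝ)} (hΩ : IsOpen Ω) {F G : ℝ × ℝ × ℝ → ℝ}
    (h : ∀ q ∈ Ω, F q = G q) {p : ℝ × ℝ × ℝ} (hp : p ∈ Ω) : p2 F p = p2 G p := by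
  have hc : Continuous fun s : ℝ => ((p.1, s, p.2.2) : ℝ × ℝ × ℝ) := by fun_prop
  have hev : (fun s => F (p.1, s, p.2.2)) =ᶠ[nhds p.2.1] fun s => G (p.1, s, p.2.2) := by
    filter_upwards [hc.continuousAt.preimage_mem_nhds (hΩ.mem_nhds hp)] with s hs
    exact h _ hs
  exact hev.deriv_eq

private lemma p3_congr {Ω : Set (ℝ × ℝ × ℝ)} (hΩ : IsOpen Ω) {F G : ℝ × ℝ × ℝ → ℝ}
    (h : ∀ q ∈ Ω, F q = G q) {p : ℝ × ℝ × ℝ} (hp : p ∈ Ω) : p3 F p = p3 G p := by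
  have hc : Continuous fun s : ℝ => ((p.1, p.2.1, s) : ℝ × ℝ × ℝ) := by fun_prop
  have hev : (fun s => F (p.1, p.2.1, s)) =ᶠ[nhds p.2.2] fun s => G (p.1, p.2.1, s) := by
    filter_upwards [hc.continuousAt.preimage_mem_nhds (hΩ.mem_nhds hp)] with s hs
    exact h _ hs
  exact hev.deriv_eq

private lemma skp_alg (a1 a2 a3 c12 c13 c23 : ℝ) (ha1 : a1 ≠ 0)
    (h31 : 1 - a3 / a1 ≠ 0) (h21 : a2 / a1 - 1 ≠ 0)
    (h : a3 * (a2 - a1) * c12 + a2 * (a1 - a3) * c13 + a1 * (a3 - a2) * c23 = 0) :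
    -((c23 * a1 - a3 * c12) / a1 ^ 2) / (1 - a3 / a1)
      - (c23 * a1 - a2 * c13) / a1 ^ 2 / (a2 / a1 - 1) = 0 := by
  have h13 : a1 - a3 ≠ 0 := by
    intro hh
    apply h31
    field_simp
    linarith
  have h21' : a2 - a1 ≠ 0 := by
    intro hh
    apply h21
    field_simp
    linarith
  rw [sub_eq_zero]
  field_simp
  linear_combination h

/-- Solutions of the dispersionless Schwarzian KP equation
`u₃(u₂ − u₁)u₁₂ + u₂(u₁ − u₃)u₁₃ + u₁(u₃ − u₂)u₂₃ = 0` on an open set `Ω`, with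
`u₁ ≠ 0` and `1 − u₃/u₁ > 0`, `u₂/u₁ − 1 > 0`, satisfy the conservation law
`∂₂ log(1 − u₃/u₁) − ∂₃ log(u₂/u₁ − 1) = 0` on `Ω`. -/
theorem dispersionless_schwarzian_KP_conservation
    (Ω : Set (ℝ × ℝ × ℝ)) (hΩ : IsOpen Ω)
    (u : ℝ × ℝ × ℝ → ℝ) (hu : ContDiffOn ℝ 2 u Ω)
    (h1 : ∀ p ∈ Ω, p1 u p ≠ 0)
    (h31 : ∀ p ∈ Ω, 0 < 1 - p3 u p / p1 u p)
    (h21 : ∀ p ∈ Ω, 0 < p2 u p / p1 u p - 1)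
    (hSKP : ∀ p ∈ Ω,
      p3 u p * (p2 u p - p1 u p) * p1 (p2 u) p
        + p2 u p * (p1 u p - p3 u p) * p1 (p3 u) p
        + p1 u p * (p3 u p - p2 u p) * p2 (p3 u) p = 0) :
    ∀ p ∈ Ω,
      p2 (fun q => Real.log (1 - p3 u q / p1 u q)) p
        - p3 (fun q => Real.log (p2 u q / p1 u q - 1)) p = 0 := by
  intro p hp
  have hmem : Ω ∈ nhds p := hΩ.mem_nhds hp
  have hud : ∀ q ∈ Ω, DifferentiableAt ℝ u q := fun q hq =>
    (hu.contDiffAt (hΩ.mem_nhds hq)).differentiableAt (by norm_num)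
  have hu1 : ∀ q ∈ Ω, p1 u q = fderiv ℝ u q (1, 0, 0) := fun q hq =>
    (hasDerivAt_slice1 u q (hud q hq)).deriv
  have hu2 : ∀ q ∈ Ω, p2 u q = fderiv ℝ u q (0, 1, 0) := fun q hq =>
    (hasDerivAt_slice2 u q (hud q hq)).deriv
  have hu3 : ∀ q ∈ Ω, p3 u q = fderiv ℝ u q (0, 0, 1) := fun q hq =>
    (hasDerivAt_slice3 u q (hud q hq)).deriv
  have hΦ : ContDiffAt ℝ 1 (fderiv ℝ u) p :=
    (hu.contDiffAt hmem).fderiv_right (by norm_num)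
  have hΦd : DifferentiableAt ℝ (fderiv ℝ u) p := hΦ.differentiableAt one_ne_zero
  have hFd : ∀ v : ℝ × ℝ × ℝ, DifferentiableAt ℝ (fun q => fderiv ℝ u q v) p :=
    fun v => hΦd.clm_apply (differentiableAt_const v)
  have hsymm : IsSymmSndFDerivAt ℝ u p :=
    (hu.contDiffAt hmem).isSymmSndFDerivAt (by simp)
  have hsecond : ∀ v w : ℝ × ℝ × ℝ,
      fderiv ℝ (fun q => fderiv ℝ u q v) p w = fderiv ℝ (fderiv ℝ u) p v w := by
    intro v w
    rw [fderiv_clm_apply hΦd (differentiableAt_const v)]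
    simp [hsymm w v]
  -- nonvanishing facts at p, expressed via fderiv
  have ha1ne : fderiv ℝ u p (1, 0, 0) ≠ 0 := by rw [← hu1 p hp]; exact h1 p hp
  have h31p : (0 : ℝ) < 1 - fderiv ℝ u p (0, 0, 1) / fderiv ℝ u p (1, 0, 0) := by
    rw [← hu1 p hp, ← hu3 p hp]; exact h31 p hp
  have h21p : (0 : ℝ) < fderiv ℝ u p (0, 1, 0) / fderiv ℝ u p (1, 0, 0) - 1 := by
    rw [← hu1 p hp, ← hu2 p hp]; exact h21 p hp
  -- rewrite the two log-terms
  have key2 : p2 (fun q => Real.log (1 - p3 u q / p1 u q)) p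
      = p2 (fun q => Real.log (1 - fderiv ℝ u q (0, 0, 1) / fderiv ℝ u q (1, 0, 0))) p :=
    p2_congr hΩ (fun q hq => by rw [hu3 q hq, hu1 q hq]) hp
  have key3 : p3 (fun q => Real.log (p2 u q / p1 u q - 1)) p
      = p3 (fun q => Real.log (fderiv ℝ u q (0, 1, 0) / fderiv ℝ u q (1, 0, 0) - 1)) p :=
    p3_congr hΩ (fun q hq => by rw [hu2 q hq, hu1 q hq]) hp
  -- explicit derivatives of the composite functions
  have hd3 := hasDerivAt_slice2 (fun q => fderiv ℝ u q (0, 0, 1)) p (hFd (0, 0, 1))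
  have hd1 := hasDerivAt_slice2 (fun q => fderiv ℝ u q (1, 0, 0)) p (hFd (1, 0, 0))
  have hdiv2 := hd3.div hd1 ha1ne
  have hlog2 := (hdiv2.const_sub 1).log (ne_of_gt h31p)
  have hd2' := hasDerivAt_slice3 (fun q => fderiv ℝ u q (0, 1, 0)) p (hFd (0, 1, 0))
  have hd1' := hasDerivAt_slice3 (fun q => fderiv ℝ u q (1, 0, 0)) p (hFd (1, 0, 0))
  have hdiv3 := hd2'.div hd1' ha1ne
  have hlog3 := (hdiv3.sub_const 1).log (ne_of_gt h21p)
  have e2 := hlog2.deriv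
  have e3 := hlog3.deriv
  rw [key2, key3]
  show deriv _ _ - deriv _ _ = 0
  erw [e2, e3]
  -- rewrite SKP second-derivative terms
  have hk12 : p1 (p2 u) p = fderiv ℝ (fderiv ℝ u) p (1, 0, 0) (0, 1, 0) := by
    rw [p1_congr hΩ hu2 hp]
    refine Eq.trans
      ((hasDerivAt_slice1 (fun q => fderiv ℝ u q (0, 1, 0)) p (hFd (0, 1, 0))).deriv) ?_
    rw [hsecond, hsymm]
  have hk13 : p1 (p3 u) p = fderiv ℝ (fderiv ℝ u) p (1, 0, 0) (0, 0, 1) := by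
    rw [p1_congr hΩ hu3 hp]
    refine Eq.trans
      ((hasDerivAt_slice1 (fun q => fderiv ℝ u q (0, 0, 1)) p (hFd (0, 0, 1))).deriv) ?_
    rw [hsecond, hsymm]
  have hk23 : p2 (p3 u) p = fderiv ℝ (fderiv ℝ u) p (0, 1, 0) (0, 0, 1) := by
    rw [p2_congr hΩ hu3 hp]
    refine Eq.trans
      ((hasDerivAt_slice2 (fun q => fderiv ℝ u q (0, 0, 1)) p (hFd (0, 0, 1))).deriv) ?_
    rw [hsecond, hsymm]
  have hskp' := hSKP p hp
  rw [hk12, hk13, hk23, hu1 p hp, hu2 p hp, hu3 p hp] at hskp'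
  -- normalize second derivatives appearing in the derivative expressions
  have r1 : fderiv ℝ (fun q => fderiv ℝ u q (0, 0, 1)) p (0, 1, 0)
      = fderiv ℝ (fderiv ℝ u) p (0, 1, 0) (0, 0, 1) := by rw [hsecond, hsymm]
  have r2 : fderiv ℝ (fun q => fderiv ℝ u q (1, 0, 0)) p (0, 1, 0)
      = fderiv ℝ (fderiv ℝ u) p (1, 0, 0) (0, 1, 0) := by rw [hsecond, hsymm]
  have r3 : fderiv ℝ (fun q => fderiv ℝ u q (0, 1, 0)) p (0, 0, 1)
      = fderiv ℝ (fderiv ℝ u) p (0, 1, 0) (0, 0, 1) := by rw [hsecond]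
  have r4 : fderiv ℝ (fun q => fderiv ℝ u q (1, 0, 0)) p (0, 0, 1)
      = fderiv ℝ (fderiv ℝ u) p (1, 0, 0) (0, 0, 1) := by rw [hsecond]
  have hpe : ((p.1, p.2.1, p.2.2) : ℝ × ℝ × ℝ) = p := rfl
  simp only [hpe, r1, r2, r3, r4]
  exact skp_alg _ _ _ _ _ _ ha1ne (ne_of_gt h31p) (ne_of_gt h21p) hskp'
end
end

section
/- Let ε > 0 and let u, ψ : ℤ² × ℝ → ℝ be differentiable in the real variable x₃, with u₃ = ∂₃u. Suppose that at every point the linear system T₁ψ = −e^{(T₁u − u)/ε}·(T₂ψ − ψ) and ε·∂₃ψ = −u₃·(T₂ψ − ψ) holds, and that T₂ψ − ψ is nowhere zero and T₁u₃ is nowhere zero. Then u satisfies the differential–difference equation T₂u₃/T₁u₃ = e^{(T₁₂u − T₁u − T₂u + u)/ε} at every point. -/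
noncomputable section

/-- Shift of the first (discrete) argument. -/
def S1 (v : ℤ × ℤ × ℝ → ℝ) : ℤ × ℤ × ℝ → ℝ := fun p => v (p.1 + 1, p.2.1, p.2.2)

/-- Shift of the second (discrete) argument. -/
def S2 (v : ℤ × ℤ × ℝ → ℝ) : ℤ × ℤ × ℝ → ℝ := fun p => v (p.1, p.2.1 + 1, p.2.2)

/-- Partial derivative with respect to the third (continuous) variable `x₃`. -/
def d3 (v : ℤ × ℤ × ℝ → ℝ) : ℤ × ℤ × ℝ → ℝ :=
  fun p => deriv (fun s => v (p.1, p.2.1, s)) p.2.2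

/-- Compatibility of the Lax pair `T₁ψ = −e^{(T₁u − u)/ε}(T₂ψ − ψ)`,
`ε ψ₃ = −u₃(T₂ψ − ψ)` forces the differential–difference equation
`T₂u₃/T₁u₃ = e^{(T₁₂u − T₁u − T₂u + u)/ε}`. -/
theorem lax_pair_case2a (ε : ℝ) (hε : 0 < ε) (u ψ : ℤ × ℤ × ℝ → ℝ)
    (hu : ∀ (m n : ℤ), Differentiable ℝ (fun s : ℝ => u (m, n, s)))
    (hψ : ∀ (m n : ℤ), Differentiable ℝ (fun s : ℝ => ψ (m, n, s)))
    (hL1 : ∀ p : ℤ × ℤ × ℝ,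
      S1 ψ p = -Real.exp ((S1 u p - u p) / ε) * (S2 ψ p - ψ p))
    (hL2 : ∀ p : ℤ × ℤ × ℝ, ε * d3 ψ p = -(d3 u p) * (S2 ψ p - ψ p))
    (hne : ∀ p : ℤ × ℤ × ℝ, S2 ψ p - ψ p ≠ 0)
    (hu3 : ∀ p : ℤ × ℤ × ℝ, S1 (d3 u) p ≠ 0) :
    ∀ p : ℤ × ℤ × ℝ,
      S2 (d3 u) p / S1 (d3 u) p
        = Real.exp ((S1 (S2 u) p - S1 u p - S2 u p + u p) / ε) := by
  rintro ⟨m, n, x⟩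
  have hεne : ε ≠ 0 := ne_of_gt hε
  -- derivative data
  have hu0 := ((hu m n) x).hasDerivAt
  have hu1 := ((hu (m + 1) n) x).hasDerivAt
  have hψ0 := ((hψ m n) x).hasDerivAt
  have hψ2 := ((hψ m (n + 1)) x).hasDerivAt
  set a0 : ℝ := deriv (fun s => u (m, n, s)) x with ha0def
  set a1 : ℝ := deriv (fun s => u (m + 1, n, s)) x with ha1def
  set a2 : ℝ := deriv (fun s => u (m, n + 1, s)) x with ha2def
  set E : ℝ := Real.exp ((u (m + 1, n, x) - u (m, n, x)) / ε) with hEdef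
  set E2 : ℝ := Real.exp ((u (m + 1, n + 1, x) - u (m, n + 1, x)) / ε) with hE2def
  -- the first Lax equation as function identity
  have hfun : (fun s : ℝ => ψ (m + 1, n, s))
      = fun s : ℝ =>
        -Real.exp ((u (m + 1, n, s) - u (m, n, s)) / ε) * (ψ (m, n + 1, s) - ψ (m, n, s)) := by
    funext s
    simpa [S1, S2] using hL1 (m, n, s)
  have hG : HasDerivAt
      (fun s : ℝ =>
        -Real.exp ((u (m + 1, n, s) - u (m, n, s)) / ε) * (ψ (m, n + 1, s) - ψ (m, n, s)))
      (-(Real.exp ((u (m + 1, n, x) - u (m, n, x)) / ε) * ((a1 - a0) / ε))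
          * (ψ (m, n + 1, x) - ψ (m, n, x))
        + -Real.exp ((u (m + 1, n, x) - u (m, n, x)) / ε)
          * (deriv (fun s => ψ (m, n + 1, s)) x - deriv (fun s => ψ (m, n, s)) x)) x :=
    ((((hu1.sub hu0).div_const ε).exp).neg).mul (hψ2.sub hψ0)
  have hd : deriv (fun s : ℝ => ψ (m + 1, n, s)) x
      = -(E * ((a1 - a0) / ε)) * (ψ (m, n + 1, x) - ψ (m, n, x))
        + -E * (deriv (fun s => ψ (m, n + 1, s)) x - deriv (fun s => ψ (m, n, s)) x) := by
    rw [hfun]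
    exact hG.deriv
  -- instantiate the Lax equations at the relevant points
  have h0 : ε * deriv (fun s => ψ (m, n, s)) x = -a0 * (ψ (m, n + 1, x) - ψ (m, n, x)) := by
    simpa [S1, S2, d3] using hL2 (m, n, x)
  have h1 : ε * deriv (fun s => ψ (m + 1, n, s)) x
      = -a1 * (ψ (m + 1, n + 1, x) - ψ (m + 1, n, x)) := by
    simpa [S1, S2, d3] using hL2 (m + 1, n, x)
  have h2 : ε * deriv (fun s => ψ (m, n + 1, s)) x
      = -a2 * (ψ (m, n + 1 + 1, x) - ψ (m, n + 1, x)) := by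
    simpa [S1, S2, d3] using hL2 (m, n + 1, x)
  have g0 : ψ (m + 1, n, x) = -E * (ψ (m, n + 1, x) - ψ (m, n, x)) := by
    simpa [S1, S2] using hL1 (m, n, x)
  have g2 : ψ (m + 1, n + 1, x) = -E2 * (ψ (m, n + 1 + 1, x) - ψ (m, n + 1, x)) := by
    simpa [S1, S2] using hL1 (m, n + 1, x)
  have hD2 : ψ (m, n + 1 + 1, x) - ψ (m, n + 1, x) ≠ 0 := by
    simpa [S2] using hne (m, n + 1, x)
  have ha1 : a1 ≠ 0 := by simpa [S1, d3] using hu3 (m, n, x)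
  have hEne : E ≠ 0 := Real.exp_ne_zero _
  have key : a1 * E2 * (ψ (m, n + 1 + 1, x) - ψ (m, n + 1, x))
      = E * a2 * (ψ (m, n + 1 + 1, x) - ψ (m, n + 1, x)) := by
    have hd' : ε * deriv (fun s : ℝ => ψ (m + 1, n, s)) x
        = -(E * (a1 - a0)) * (ψ (m, n + 1, x) - ψ (m, n, x))
          + -E * (ε * deriv (fun s => ψ (m, n + 1, s)) x
            - ε * deriv (fun s => ψ (m, n, s)) x) := by
      rw [hd]; field_simp
    linear_combination hd' - h1 + a1 * g2 - a1 * g0 - E * h2 + E * h0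
  have key2 : a1 * E2 = E * a2 := mul_right_cancel₀ hD2 key
  have hE2E : E2 = Real.exp ((u (m + 1, n + 1, x) - u (m + 1, n, x) - u (m, n + 1, x)
      + u (m, n, x)) / ε) * E := by
    rw [hE2def, hEdef, ← Real.exp_add]
    congr 1
    field_simp
    ring
  have hfinal : a2 = Real.exp ((u (m + 1, n + 1, x) - u (m + 1, n, x) - u (m, n + 1, x)
      + u (m, n, x)) / ε) * a1 := by
    apply mul_left_cancel₀ hEne
    rw [hE2E] at key2
    linarith [key2]
  show S2 (d3 u) (m, n, x) / S1 (d3 u) (m, n, x)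
      = Real.exp ((S1 (S2 u) (m, n, x) - S1 u (m, n, x) - S2 u (m, n, x) + u (m, n, x)) / ε)
  simp only [S1, S2, d3]
  rw [show deriv (fun s => u (m, n + 1, s)) x = a2 from rfl, hfinal]
  field_simp
  exact div_self ha1
end
end

section
/- Let ε > 0 and let u, ψ : ℤ² × ℝ → ℝ be differentiable in the real variable x₃, with u₃ = ∂₃u. Suppose that at every point the linear system T₁ψ = −((T₁u − u)/ε)·T₂ψ + ψ and ε·∂₃ψ = −u₃·T₂ψ holds, and that ψ is nowhere zero. Then u satisfies the differential–difference equation (T₁₂u − T₂u)·T₁u₃ = (T₁u − u)·T₂u₃ at every point. -/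
noncomputable section

/-- Compatibility of the Lax pair `T₁ψ = −((T₁u − u)/ε)T₂ψ + ψ`,
`ε ψ₃ = −u₃ T₂ψ` forces the differential–difference equation
`(T₁₂u − T₂u)T₁u₃ = (T₁u − u)T₂u₃`. -/
theorem lax_pair_case2bi (ε : ℝ) (hε : 0 < ε) (u ψ : ℤ × ℤ × ℝ → ℝ)
    (hu : ∀ (m n : ℤ), Differentiable ℝ (fun s : ℝ => u (m, n, s)))
    (hψ : ∀ (m n : ℤ), Differentiable ℝ (fun s : ℝ => ψ (m, n, s)))
    (hL1 : ∀ p : ℤ × ℤ × ℝ, S1 ψ p = -((S1 u p - u p) / ε) * S2 ψ p + ψ p)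
    (hL2 : ∀ p : ℤ × ℤ × ℝ, ε * d3 ψ p = -(d3 u p) * S2 ψ p)
    (hne : ∀ p : ℤ × ℤ × ℝ, ψ p ≠ 0) :
    ∀ p : ℤ × ℤ × ℝ,
      (S1 (S2 u) p - S2 u p) * S1 (d3 u) p = (S1 u p - u p) * S2 (d3 u) p := by
  rintro ⟨m, n, x⟩
  simp only [S1, S2, d3] at hL1 hL2 ⊢
  have hεne : ε ≠ 0 := hε.ne'
  -- derivatives as HasDerivAt
  have hdu : ∀ (a b : ℤ), HasDerivAt (fun s : ℝ => u (a, b, s))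
      (deriv (fun s : ℝ => u (a, b, s)) x) x := fun a b => (hu a b x).hasDerivAt
  have hdψ : ∀ (a b : ℤ), HasDerivAt (fun s : ℝ => ψ (a, b, s))
      (deriv (fun s : ℝ => ψ (a, b, s)) x) x := fun a b => (hψ a b x).hasDerivAt
  -- notation
  set a := u (m, n, x) with ha
  set a1 := u (m + 1, n, x) with ha1
  set a2 := u (m, n + 1, x) with ha2
  set a12 := u (m + 1, n + 1, x) with ha12
  set da := deriv (fun s : ℝ => u (m, n, s)) x with hda
  set da1 := deriv (fun s : ℝ => u (m + 1, n, s)) x with hda1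
  set da2 := deriv (fun s : ℝ => u (m, n + 1, s)) x with hda2
  set b2 := ψ (m, n + 1, x) with hb2
  set b12 := ψ (m + 1, n + 1, x) with hb12
  set b22 := ψ (m, n + 1 + 1, x) with hb22
  set db := deriv (fun s : ℝ => ψ (m, n, s)) x with hdb
  set db1 := deriv (fun s : ℝ => ψ (m + 1, n, s)) x with hdb1
  set db2 := deriv (fun s : ℝ => ψ (m, n + 1, s)) x with hdb2
  -- differentiate the first Lax equation in x₃
  have hRHS : HasDerivAt
      (fun s : ℝ => -((u (m + 1, n, s) - u (m, n, s)) / ε) * ψ (m, n + 1, s) + ψ (m, n, s))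
      ((-((da1 - da) / ε)) * b2 + (-((a1 - a) / ε)) * db2 + db) x := by
    exact (((((hdu (m + 1) n).sub (hdu m n)).div_const ε).neg.mul (hdψ m (n + 1))).add
      (hdψ m n))
  have hfun : (fun s : ℝ => ψ (m + 1, n, s)) =
      (fun s : ℝ => -((u (m + 1, n, s) - u (m, n, s)) / ε) * ψ (m, n + 1, s) + ψ (m, n, s)) :=
    funext fun s => hL1 (m, n, s)
  have H1 : db1 = (-((da1 - da) / ε)) * b2 + (-((a1 - a) / ε)) * db2 + db := by
    rw [hdb1]
    have := (hfun ▸ hRHS : HasDerivAt (fun s : ℝ => ψ (m + 1, n, s))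
      ((-((da1 - da) / ε)) * b2 + (-((a1 - a) / ε)) * db2 + db) x)
    exact this.deriv
  have H1' : ε * db1 = -(da1 - da) * b2 - (a1 - a) * db2 + ε * db := by
    rw [H1]; field_simp; ring
  have H2 : ε * db1 = -da1 * b12 := hL2 (m + 1, n, x)
  have H3 : ε * db = -da * b2 := hL2 (m, n, x)
  have H4 : ε * db2 = -da2 * b22 := hL2 (m, n + 1, x)
  have H5 : b12 = -((a12 - a2) / ε) * b22 + b2 := hL1 (m, n + 1, x)
  have H5' : ε * b12 = -(a12 - a2) * b22 + ε * b2 := by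
    rw [H5]; field_simp
  have hb22ne : b22 ≠ 0 := hne (m, n + 1 + 1, x)
  have T : (a12 - a2) * da1 * b22 = (a1 - a) * da2 * b22 := by
    linear_combination (-ε) * H2 + ε * H1' + da1 * H5' - (a1 - a) * H4 + ε * H3
  exact mul_right_cancel₀ hb22ne T
end
end
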